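/- arXiv:1309.2566 — 4 statements merged into one kernel-verified Lean document; each statement's English description precedes it below -/
import Mathlib

section
/- Let (Mₙ)_{n≥1} be i.i.d. random 3×3 stochastic matrices, each equal to the identity with one uniformly chosen row (out of three) replaced by an independent splitting ratio P. Suppose the rows L⁽¹⁾ₙ, L⁽²⁾ₙ, L⁽³⁾ₙ of the product Sₙ = Mₙ⋯M₁ converge a.s. along a subsequence to L⁽¹⁾, L⁽²⁾, L⁽³⁾. Then a.s. L⁽¹⁾ = L⁽²⁾ = L⁽³⁾. -/
open MeasureTheory ProbabilityTheory Filter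
open scoped ENNReal

instance : MeasurableSpace (Matrix (Fin 3) (Fin 3) ℝ) :=
  inferInstanceAs (MeasurableSpace (Fin 3 → Fin 3 → ℝ))

/-- The identity matrix with its `i`-th row replaced by the vector `p`. -/
noncomputable def rowReplaceMatrix (p : Fin 3 → ℝ) (i : Fin 3) :
    Matrix (Fin 3) (Fin 3) ℝ :=
  fun r c => if r = i then p c else if r = c then 1 else 0

/-- The common law of the random matrices: pick a splitting ratio according to
`ν` and a uniform row index, and form the identity with that row replaced. -/
noncomputable def randomMatrixLaw (ν : Measure (Fin 3 → ℝ)) :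
    Measure (Matrix (Fin 3) (Fin 3) ℝ) :=
  Measure.map (fun q : (Fin 3 → ℝ) × Fin 3 => rowReplaceMatrix q.1 q.2)
    (ν.prod (PMF.uniformOfFintype (Fin 3)).toMeasure)

namespace RowsEqAux

abbrev Mat := Matrix (Fin 3) (Fin 3) ℝ

/-- max pairwise distance between rows -/
noncomputable def Dm (s : Mat) : ℝ :=
  max (max ‖s 0 - s 1‖ ‖s 0 - s 2‖) ‖s 1 - s 2‖

lemma Dm_nonneg (s : Mat) : 0 ≤ Dm s :=
  le_trans (norm_nonneg _) (le_max_of_le_left (le_max_left _ _))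

lemma row_sub_le (s : Mat) (i j : Fin 3) : ‖s i - s j‖ ≤ Dm s := by
  have h01 : ‖s 0 - s 1‖ ≤ Dm s := le_max_of_le_left (le_max_left _ _)
  have h02 : ‖s 0 - s 2‖ ≤ Dm s := le_max_of_le_left (le_max_right _ _)
  have h12 : ‖s 1 - s 2‖ ≤ Dm s := le_max_right _ _
  have h0 : (0:ℝ) ≤ Dm s := Dm_nonneg s
  fin_cases i <;> fin_cases j <;>
    first
      | simpa using h0
      | simpa using h01
      | simpa using h02
      | simpa using h12
      | (rw [norm_sub_rev]; first | simpa using h01 | simpa using h02 | simpa using h12)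

/-- convex combination of the rows of `s` with weights `a` -/
noncomputable def combo (a : Fin 3 → ℝ) (s : Mat) : Fin 3 → ℝ :=
  fun c => ∑ k, a k * s k c

lemma mul_row (m s : Mat) (i : Fin 3) : (m * s) i = combo (m i) s := by
  funext c; simp [Matrix.mul_apply, combo]

lemma sub_combo (a : Fin 3 → ℝ) (s : Mat) (h1 : ∑ k, a k = 1) (x : Fin 3 → ℝ) :
    x - combo a s = ∑ k, a k • (x - s k) := by
  have h1' : a 0 + a 1 + a 2 = 1 := by simpa [Fin.sum_univ_three] using h1
  funext c
  simp only [Pi.sub_apply, combo, Fin.sum_univ_three, Finset.sum_apply, Pi.smul_apply,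
    smul_eq_mul]
  linear_combination (-(x c)) * h1'

lemma norm_sub_combo_le (a : Fin 3 → ℝ) (s : Mat) (ha : ∀ k, 0 ≤ a k)
    (h1 : ∑ k, a k = 1) (x : Fin 3 → ℝ) :
    ‖x - combo a s‖ ≤ ∑ k, a k * ‖x - s k‖ := by
  rw [sub_combo a s h1 x]
  refine (norm_sum_le _ _).trans ?_
  refine Finset.sum_le_sum fun k _ => ?_
  rw [norm_smul, Real.norm_eq_abs, abs_of_nonneg (ha k)]

lemma norm_row_sub_combo (a : Fin 3 → ℝ) (s : Mat) (ha : ∀ k, 0 ≤ a k)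
    (h1 : ∑ k, a k = 1) (j : Fin 3) :
    ‖s j - combo a s‖ ≤ (1 - a j) * Dm s := by
  have h1' : a 0 + a 1 + a 2 = 1 := by simpa [Fin.sum_univ_three] using h1
  refine (norm_sub_combo_le a s ha h1 (s j)).trans ?_
  have D0 := Dm_nonneg s
  fin_cases j <;>
    simp only [Fin.sum_univ_three, Fin.isValue, Fin.mk_zero, Fin.mk_one,
      show (⟨2,by omega⟩ : Fin 3) = 2 from rfl] <;>
    [ (have e := row_sub_le s 0 1; have e' := row_sub_le s 0 2;
       have z : ‖s 0 - s 0‖ = 0 := by simp;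
       nlinarith [ha 0, ha 1, ha 2]);
      (have e := row_sub_le s 1 0; have e' := row_sub_le s 1 2;
       have z : ‖s 1 - s 1‖ = 0 := by simp;
       nlinarith [ha 0, ha 1, ha 2]);
      (have e := row_sub_le s 2 0; have e' := row_sub_le s 2 1;
       have z : ‖s 2 - s 2‖ = 0 := by simp;
       nlinarith [ha 0, ha 1, ha 2])]

/-- a matrix is (row-)stochastic -/
def Stoch (m : Mat) : Prop := (∀ r c, 0 ≤ m r c) ∧ ∀ r, ∑ c, m r c = 1

lemma norm_combo_sub_combo (a b : Fin 3 → ℝ) (s : Mat)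
    (ha : ∀ k, 0 ≤ a k) (ha1 : ∑ k, a k = 1)
    (hb : ∀ k, 0 ≤ b k) (hb1 : ∑ k, b k = 1) :
    ‖combo a s - combo b s‖ ≤ Dm s := by
  have h := norm_sub_combo_le b s hb hb1 (combo a s)
  refine h.trans ?_
  have hk : ∀ k, ‖combo a s - s k‖ ≤ Dm s := by
    intro k
    rw [norm_sub_rev]
    refine (norm_row_sub_combo a s ha ha1 k).trans ?_
    nlinarith [Dm_nonneg s, ha k]
  calc ∑ k, b k * ‖combo a s - s k‖ ≤ ∑ k, b k * Dm s :=
        Finset.sum_le_sum fun k _ => mul_le_mul_of_nonneg_left (hk k) (hb k)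
    _ = Dm s := by rw [← Finset.sum_mul, hb1, one_mul]

lemma Dm_mul_le (m s : Mat) (hm : Stoch m) : Dm (m * s) ≤ Dm s := by
  have key : ∀ i j : Fin 3, ‖(m * s) i - (m * s) j‖ ≤ Dm s := by
    intro i j
    rw [mul_row, mul_row]
    exact norm_combo_sub_combo (m i) (m j) s (hm.1 i) (hm.2 i) (hm.1 j) (hm.2 j)
  exact max_le (max_le (key 0 1) (key 0 2)) (key 1 2)

/-- The "good" matrices: identity off row `i`, row `i` has entries `≥ ε` summing to 1. -/
def Good (ε : ℝ) (i : Fin 3) : Set Mat :=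
  {m | (∀ r c, r ≠ i → m r c = if r = c then 1 else 0) ∧ (∀ c, ε ≤ m i c) ∧ ∑ c, m i c = 1}

lemma contract {ε : ℝ} (hε : 0 < ε) (hε1 : ε ≤ 1) {m1 m2 : Mat} (s : Mat)
    (h1 : m1 ∈ Good ε 0) (h2 : m2 ∈ Good ε 1) :
    Dm (m2 * (m1 * s)) ≤ (1 - ε ^ 2) * Dm s := by
  obtain ⟨hid1, hge1, hsum1⟩ := h1
  obtain ⟨hid2, hge2, hsum2⟩ := h2
  have hε0 : (0:ℝ) ≤ ε := hε.le
  have hp0 : ∀ k, 0 ≤ m1 0 k := fun k => le_trans hε0 (hge1 k)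
  have hq0 : ∀ k, 0 ≤ m2 1 k := fun k => le_trans hε0 (hge2 k)
  set t : Mat := m1 * s with ht
  set D := Dm s with hD
  have D0 : 0 ≤ D := Dm_nonneg s
  have t0 : t 0 = combo (m1 0) s := mul_row m1 s 0
  have t1 : t 1 = s 1 := by
    funext c
    have e0 : m1 1 0 = 0 := by simpa using hid1 1 0 (by decide)
    have e1 : m1 1 1 = 1 := by simpa using hid1 1 1 (by decide)
    have e2 : m1 1 2 = 0 := by simpa using hid1 1 2 (by decide)
    simp [ht, Matrix.mul_apply, Fin.sum_univ_three, e0, e1, e2]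
  have t2 : t 2 = s 2 := by
    funext c
    have e0 : m1 2 0 = 0 := by simpa using hid1 2 0 (by decide)
    have e1 : m1 2 1 = 0 := by simpa using hid1 2 1 (by decide)
    have e2 : m1 2 2 = 1 := by simpa using hid1 2 2 (by decide)
    simp [ht, Matrix.mul_apply, Fin.sum_univ_three, e0, e1, e2]
  have u0 : (m2 * t) 0 = t 0 := by
    funext c
    have e0 : m2 0 0 = 1 := by simpa using hid2 0 0 (by decide)
    have e1 : m2 0 1 = 0 := by simpa using hid2 0 1 (by decide)
    have e2 : m2 0 2 = 0 := by simpa using hid2 0 2 (by decide)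
    simp [Matrix.mul_apply, Fin.sum_univ_three, e0, e1, e2]
  have u1 : (m2 * t) 1 = combo (m2 1) t := mul_row m2 t 1
  have u2 : (m2 * t) 2 = t 2 := by
    funext c
    have e0 : m2 2 0 = 0 := by simpa using hid2 2 0 (by decide)
    have e1 : m2 2 1 = 0 := by simpa using hid2 2 1 (by decide)
    have e2 : m2 2 2 = 1 := by simpa using hid2 2 2 (by decide)
    simp [Matrix.mul_apply, Fin.sum_univ_three, e0, e1, e2]
  have f1 : ‖t 0 - s 1‖ ≤ (1 - m1 0 1) * D := by
    rw [t0, norm_sub_rev]; exact norm_row_sub_combo (m1 0) s hp0 hsum1 1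
  have f2 : ‖t 0 - s 2‖ ≤ (1 - m1 0 2) * D := by
    rw [t0, norm_sub_rev]; exact norm_row_sub_combo (m1 0) s hp0 hsum1 2
  have hq1' : m2 1 0 + m2 1 1 + m2 1 2 = 1 := by simpa [Fin.sum_univ_three] using hsum2
  have hp1' : m1 0 0 + m1 0 1 + m1 0 2 = 1 := by simpa [Fin.sum_univ_three] using hsum1
  have g02 : ‖(m2 * t) 0 - (m2 * t) 2‖ ≤ (1 - ε ^ 2) * D := by
    rw [u0, u2, t2]
    refine f2.trans ?_
    have hm : ε ^ 2 ≤ m1 0 2 := by nlinarith [hge1 2]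
    exact mul_le_mul_of_nonneg_right (by linarith) D0
  have g12 : ‖(m2 * t) 1 - (m2 * t) 2‖ ≤ (1 - ε ^ 2) * D := by
    rw [u1, u2, norm_sub_rev]
    refine (norm_sub_combo_le (m2 1) t hq0 hsum2 (t 2)).trans ?_
    have b0 : ‖t 2 - t 0‖ ≤ (1 - ε) * D := by
      rw [norm_sub_rev, t2]
      refine f2.trans ?_
      exact mul_le_mul_of_nonneg_right (by linarith [hge1 2]) D0
    have b1 : ‖t 2 - t 1‖ ≤ D := by rw [t2, t1]; exact row_sub_le s 2 1
    have b2 : ‖t 2 - t 2‖ = 0 := by simp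
    rw [Fin.sum_univ_three, b2]
    have key : m2 1 0 * (1 - ε) + m2 1 1 ≤ 1 - ε ^ 2 := by
      nlinarith [mul_le_mul_of_nonneg_right (hge2 0) hε0, hge2 2]
    nlinarith [mul_le_mul_of_nonneg_left b0 (hq0 0), mul_le_mul_of_nonneg_left b1 (hq0 1),
      mul_le_mul_of_nonneg_right key D0]
  have g01 : ‖(m2 * t) 0 - (m2 * t) 1‖ ≤ (1 - ε ^ 2) * D := by
    rw [u0, u1]
    refine (norm_sub_combo_le (m2 1) t hq0 hsum2 (t 0)).trans ?_
    have b0 : ‖t 0 - t 0‖ = 0 := by simp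
    have b1 : ‖t 0 - t 1‖ ≤ (1 - ε) * D := by
      rw [t1]; refine f1.trans ?_
      exact mul_le_mul_of_nonneg_right (by linarith [hge1 1]) D0
    have b2 : ‖t 0 - t 2‖ ≤ (1 - ε) * D := by
      rw [t2]; refine f2.trans ?_
      exact mul_le_mul_of_nonneg_right (by linarith [hge1 2]) D0
    rw [Fin.sum_univ_three, b0]
    have key : (m2 1 1 + m2 1 2) * (1 - ε) ≤ 1 - ε ^ 2 := by
      have h1e : (0:ℝ) ≤ 1 - ε := by linarith
      have : (m2 1 1 + m2 1 2) ≤ 1 - ε := by linarith [hge2 0]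
      nlinarith [mul_le_mul_of_nonneg_right this h1e]
    nlinarith [mul_le_mul_of_nonneg_left b1 (hq0 1), mul_le_mul_of_nonneg_left b2 (hq0 2),
      mul_le_mul_of_nonneg_right key D0]
  exact max_le (max_le g01 g02) g12

lemma Good_stoch {ε : ℝ} (hε : 0 ≤ ε) {i : Fin 3} {m : Mat} (hm : m ∈ Good ε i) : Stoch m := by
  obtain ⟨hid, hge, hsum⟩ := hm
  constructor
  · intro r c
    by_cases h : r = i
    · subst h; exact le_trans hε (hge c)
    · rw [hid r c h]; split <;> norm_num
  · intro r
    by_cases h : r = i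
    · subst h; exact hsum
    · have : ∀ c, m r c = if r = c then 1 else 0 := fun c => hid r c h
      simp [this]

lemma measurable_entry (r c : Fin 3) : Measurable fun m : Mat => m r c :=
  (measurable_pi_apply c).comp (measurable_pi_apply r)

lemma measurable_row (i : Fin 3) : Measurable fun m : Mat => m i :=
  measurable_pi_apply i

lemma measurable_Dm : Measurable Dm := by
  have h : ∀ i j : Fin 3, Measurable fun m : Mat => ‖m i - m j‖ := fun i j =>
    ((measurable_row i).sub (measurable_row j)).norm
  exact (((h 0 1).max (h 0 2)).max (h 1 2))

lemma tendsto_Dm {F : ℕ → Mat} {Lm : Mat} (h : Tendsto F atTop (nhds Lm)) :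
    Tendsto (fun k => Dm (F k)) atTop (nhds (Dm Lm)) := by
  have hr : ∀ i : Fin 3, Tendsto (fun k => F k i) atTop (nhds (Lm i)) := fun i =>
    ((continuous_apply i).tendsto Lm).comp h
  have hn : ∀ i j : Fin 3, Tendsto (fun k => ‖F k i - F k j‖) atTop (nhds ‖Lm i - Lm j‖) :=
    fun i j => ((hr i).sub (hr j)).norm
  exact (((hn 0 1).max (hn 0 2)).max (hn 1 2))

lemma measurable_matMul {α : Type*} [MeasurableSpace α] {A B : α → Mat}
    (hA : Measurable A) (hB : Measurable B) : Measurable fun x => A x * B x := by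
  refine measurable_pi_lambda _ fun r => measurable_pi_lambda _ fun c => ?_
  simp only [Matrix.mul_apply]
  exact Finset.measurable_sum _ fun k _ =>
    ((measurable_entry r k).comp hA).mul ((measurable_entry k c).comp hB)

lemma measurable_Good (ε : ℝ) (i : Fin 3) : MeasurableSet (Good ε i) := by
  have h1 : Good ε i = (⋂ r, ⋂ c, {m : Mat | r ≠ i → m r c = if r = c then 1 else 0}) ∩
      ((⋂ c, {m : Mat | ε ≤ m i c}) ∩ {m : Mat | ∑ c, m i c = 1}) := by
    ext m; simp [Good, Set.mem_iInter, forall_and]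
  rw [h1]
  refine MeasurableSet.inter ?_ (MeasurableSet.inter ?_ ?_)
  · refine MeasurableSet.iInter fun r => MeasurableSet.iInter fun c => ?_
    by_cases h : r = i
    · simp [h]
    · have : {m : Mat | r ≠ i → m r c = if r = c then 1 else 0}
          = (fun m : Mat => m r c) ⁻¹' {if r = c then (1:ℝ) else 0} := by
        ext m; simp [h]
      rw [this]
      exact measurable_entry r c (measurableSet_singleton _)
  · exact MeasurableSet.iInter fun c => measurableSet_le measurable_const (measurable_entry i c)
  · have : {m : Mat | ∑ c, m i c = 1}
        = (fun m : Mat => ∑ c, m i c) ⁻¹' {(1:ℝ)} := rfl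
    rw [this]
    exact (Finset.measurable_sum _ fun c _ => measurable_entry i c) (measurableSet_singleton _)

lemma measurable_StochSet : MeasurableSet {m : Mat | Stoch m} := by
  have h1 : {m : Mat | Stoch m} = (⋂ r, ⋂ c, {m : Mat | 0 ≤ m r c}) ∩
      ⋂ r, {m : Mat | ∑ c, m r c = 1} := by
    ext m; simp [Stoch, Set.mem_iInter, forall_and]
  rw [h1]
  refine MeasurableSet.inter ?_ ?_
  · exact MeasurableSet.iInter fun r => MeasurableSet.iInter fun c =>
      measurableSet_le measurable_const (measurable_entry r c)
  · refine MeasurableSet.iInter fun r => ?_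
    have : {m : Mat | ∑ c, m r c = 1}
        = (fun m : Mat => ∑ c, m r c) ⁻¹' {(1:ℝ)} := rfl
    rw [this]
    exact (Finset.measurable_sum _ fun c _ => measurable_entry r c) (measurableSet_singleton _)

lemma measurable_Phi : Measurable fun q : (Fin 3 → ℝ) × Fin 3 => rowReplaceMatrix q.1 q.2 := by
  unfold rowReplaceMatrix
  refine measurable_pi_lambda _ fun r => measurable_pi_lambda _ fun c => ?_
  have hset : MeasurableSet {q : (Fin 3 → ℝ) × Fin 3 | r = q.2} := by
    have : {q : (Fin 3 → ℝ) × Fin 3 | r = q.2} = Prod.snd ⁻¹' {r} := by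
      ext q; simp [eq_comm]
    rw [this]
    exact measurable_snd (measurableSet_singleton r)
  exact Measurable.ite hset ((measurable_pi_apply c).comp measurable_fst) measurable_const

/-- the product `f n * ⋯ * f 1` -/
noncomputable def prodTo (f : ℕ → Mat) : ℕ → Mat
  | 0 => 1
  | n + 1 => f (n + 1) * prodTo f n

lemma prodTo_congr {f g : ℕ → Mat} (n : ℕ) (h : ∀ i ≤ n, f i = g i) :
    prodTo f n = prodTo g n := by
  induction n with
  | zero => rfl
  | succ n ih =>
    simp only [prodTo, h (n+1) le_rfl, ih fun i hi => h i (hi.trans (Nat.le_succ n))]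

lemma measurable_prodTo {α : Type*} [MeasurableSpace α] {F : α → ℕ → Mat}
    (hF : ∀ i, Measurable fun x => F x i) (n : ℕ) :
    Measurable fun x => prodTo (F x) n := by
  induction n with
  | zero => simp only [prodTo]; exact measurable_const
  | succ n ih => exact measurable_matMul (hF (n+1)) ih

lemma Dm_one_le : Dm (1 : Mat) ≤ 2 := by
  have h : ∀ i : Fin 3, ‖(1 : Mat) i‖ ≤ 1 := by
    intro i
    rw [pi_norm_le_iff_of_nonneg (by norm_num : (0:ℝ) ≤ 1)]
    intro c
    simp only [Matrix.one_apply, Real.norm_eq_abs]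
    split_ifs <;> simp
  have k : ∀ i j : Fin 3, ‖(1:Mat) i - (1:Mat) j‖ ≤ 2 := fun i j =>
    (norm_sub_le _ _).trans (by linarith [h i, h j])
  exact max_le (max_le (k 0 1) (k 0 2)) (k 1 2)

end RowsEqAux

open RowsEqAux

/-- Let `(Mₙ)` be i.i.d. random stochastic matrices, each the identity with a
uniformly chosen row replaced by an independent splitting ratio drawn from `ν`,
and let `Sₙ = Mₙ ⋯ M₁`.  If the rows of `Sₙ` converge a.s. along a subsequence
to a limit matrix `L`, then a.s. all three rows of `L` coincide. -/
theorem subsequential_limit_rows_equal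
    {Ω : Type*} [MeasurableSpace Ω] (μ : Measure Ω) [IsProbabilityMeasure μ]
    (ν : Measure (Fin 3 → ℝ)) [IsProbabilityMeasure ν]
    (hνexch : ∀ σ : Equiv.Perm (Fin 3),
      Measure.map (fun p => p ∘ σ) ν = ν)
    (hνpos : ∀ᵐ p ∂ν, ∀ i, 0 < p i)
    (hνsum : ∀ᵐ p ∂ν, p 0 + p 1 + p 2 = 1)
    (M : ℕ → Ω → Matrix (Fin 3) (Fin 3) ℝ)
    (hMmeas : ∀ n, Measurable (M n))
    (hMindep : iIndepFun M μ)
    (hMlaw : ∀ n, Measure.map (M n) μ = randomMatrixLaw ν)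
    (S : ℕ → Ω → Matrix (Fin 3) (Fin 3) ℝ)
    (hS0 : ∀ ω, S 0 ω = 1)
    (hSrec : ∀ n ω, S (n + 1) ω = M (n + 1) ω * S n ω)
    (φ : ℕ → ℕ) (hφ : StrictMono φ)
    (L : Ω → Matrix (Fin 3) (Fin 3) ℝ)
    (hconv : ∀ᵐ ω ∂μ, Tendsto (fun k => S (φ k) ω) atTop (nhds (L ω))) :
    ∀ᵐ ω ∂μ, L ω 0 = L ω 1 ∧ L ω 1 = L ω 2 := by
  classical
  set Φ : (Fin 3 → ℝ) × Fin 3 → Mat := fun q => rowReplaceMatrix q.1 q.2 with hΦ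
  have hΦmeas : Measurable Φ := measurable_Phi
  set π : Measure ((Fin 3 → ℝ) × Fin 3) :=
    ν.prod (PMF.uniformOfFintype (Fin 3)).toMeasure with hπ
  -- the law of each M n
  have law : ∀ n (B : Set Mat), MeasurableSet B → μ (M n ⁻¹' B) = π (Φ ⁻¹' B) := by
    intro n B hB
    rw [← Measure.map_apply (hMmeas n) hB, hMlaw n, randomMatrixLaw,
      Measure.map_apply hΦmeas hB]
  -- full ν-measure of good splitting ratios
  have hGν : ν {p : Fin 3 → ℝ | (∀ c, 0 < p c) ∧ ∑ c, p c = 1} = 1 := by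
    have hmem : {p : Fin 3 → ℝ | (∀ c, 0 < p c) ∧ ∑ c, p c = 1} ∈ ae ν := by
      rw [← Filter.eventually_mem_set]
      filter_upwards [hνpos, hνsum] with p h1 h2
      exact ⟨h1, by simpa [Fin.sum_univ_three] using h2⟩
    calc ν _ = ν Set.univ := measure_congr (Filter.eventuallyEq_univ.mpr hmem)
      _ = 1 := measure_univ
  -- a.e. all M n are stochastic
  have hstoch : ∀ᵐ ω ∂μ, ∀ n, Stoch (M n ω) := by
    rw [ae_all_iff]
    intro n
    have hpre : μ (M n ⁻¹' {m : Mat | Stoch m}) = 1 := by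
      rw [law n _ measurable_StochSet]
      have hsub : {p : Fin 3 → ℝ | (∀ c, 0 < p c) ∧ ∑ c, p c = 1} ×ˢ
          (Set.univ : Set (Fin 3)) ⊆ Φ ⁻¹' {m : Mat | Stoch m} := by
        rintro ⟨p, i⟩ ⟨⟨hp, hs⟩, -⟩
        constructor
        · intro r c
          simp only [Φ, rowReplaceMatrix]
          split_ifs <;> first | exact (hp c).le | norm_num
        · intro r
          by_cases h : r = i
          · simpa [Φ, rowReplaceMatrix, h] using hs
          · simp [Φ, rowReplaceMatrix, h]
      have h1 : π ({p : Fin 3 → ℝ | (∀ c, 0 < p c) ∧ ∑ c, p c = 1} ×ˢ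
          (Set.univ : Set (Fin 3))) = 1 := by
        rw [hπ, Measure.prod_prod, hGν, measure_univ, one_mul]
      exact le_antisymm prob_le_one (h1 ▸ measure_mono hsub)
    have hms : MeasurableSet (M n ⁻¹' {m : Mat | Stoch m}) := (hMmeas n) measurable_StochSet
    have hc : μ ((M n ⁻¹' {m : Mat | Stoch m})ᶜ) = 0 := by
      rw [measure_compl hms (measure_ne_top μ _), hpre, measure_univ, tsub_self]
    exact ae_iff.mpr hc
  -- choice of ε
  set K : ℝ → Set (Fin 3 → ℝ) := fun ε => {p | (∀ c, ε ≤ p c) ∧ ∑ c, p c = 1} with hK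
  have hKcover : {p : Fin 3 → ℝ | (∀ c, 0 < p c) ∧ ∑ c, p c = 1} ⊆
      ⋃ n : ℕ, K (1/(n+1)) := by
    rintro p ⟨hp, hs⟩
    have hmin : 0 < min (p 0) (min (p 1) (p 2)) := lt_min (hp 0) (lt_min (hp 1) (hp 2))
    obtain ⟨n, hn⟩ := exists_nat_one_div_lt hmin
    have hcle : ∀ c : Fin 3, min (p 0) (min (p 1) (p 2)) ≤ p c := by
      intro c
      fin_cases c
      · exact min_le_left _ _
      · exact le_trans (min_le_right _ _) (min_le_left _ _)
      · exact le_trans (min_le_right _ _) (min_le_right _ _)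
    exact Set.mem_iUnion.mpr ⟨n, fun c => (hn.le.trans (hcle c)), hs⟩
  have hexists : ∃ n : ℕ, ν (K (1/(n+1))) ≠ 0 := by
    by_contra h
    push_neg at h
    have h0 : ν (⋃ n : ℕ, K (1/(n+1))) = 0 := measure_iUnion_null h
    have h1 : (1:ℝ≥0∞) ≤ 0 := by
      calc (1:ℝ≥0∞) = ν {p : Fin 3 → ℝ | (∀ c, 0 < p c) ∧ ∑ c, p c = 1} := hGν.symm
        _ ≤ ν (⋃ n : ℕ, K (1/(n+1))) := measure_mono hKcover
        _ = 0 := h0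
    simp at h1
  obtain ⟨nε, hνK⟩ := hexists
  set ε : ℝ := 1/(nε+1) with hεdef
  have hε : 0 < ε := by positivity
  have hε1 : ε ≤ 1 := by
    rw [hεdef, div_le_one (by positivity)]
    have h0 : (0:ℝ) ≤ (nε:ℝ) := Nat.cast_nonneg nε
    linarith
  -- lower bound for the probability of good matrices
  have hGoodLB : ∀ n (i : Fin 3), ν (K ε) / 3 ≤ μ (M n ⁻¹' Good ε i) := by
    intro n i
    rw [law n _ (measurable_Good ε i)]
    have hsub : K ε ×ˢ ({i} : Set (Fin 3)) ⊆ Φ ⁻¹' Good ε i := by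
      rintro ⟨p, j⟩ ⟨⟨hp, hs⟩, hj⟩
      simp only [Set.mem_singleton_iff] at hj
      subst hj
      refine ⟨fun r c hr => ?_, fun c => ?_, ?_⟩
      · simp [Φ, rowReplaceMatrix, hr]
      · simpa [Φ, rowReplaceMatrix] using hp c
      · simpa [Φ, rowReplaceMatrix] using hs
    have huni : (PMF.uniformOfFintype (Fin 3)).toMeasure {i} = 3⁻¹ := by
      rw [PMF.toMeasure_apply_singleton _ _ (measurableSet_singleton i),
        PMF.uniformOfFintype_apply]
      norm_num
    calc ν (K ε) / 3 = ν (K ε) * 3⁻¹ := by rw [div_eq_mul_inv]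
      _ = ν (K ε) * (PMF.uniformOfFintype (Fin 3)).toMeasure {i} := by rw [huni]
      _ = π (K ε ×ˢ ({i} : Set (Fin 3))) := (Measure.prod_prod _ _).symm
      _ ≤ π (Φ ⁻¹' Good ε i) := measure_mono hsub
  -- events where contraction happens
  set A : ℕ → Set Ω := fun k =>
    (M (2*k+1) ⁻¹' Good ε 0) ∩ (M (2*k+2) ⁻¹' Good ε 1) with hA
  have hAmeas : ∀ k, MeasurableSet (A k) := fun k =>
    ((hMmeas _) (measurable_Good ε 0)).inter ((hMmeas _) (measurable_Good ε 1))
  have hAlb : ∀ k, (ν (K ε)/3) * (ν (K ε)/3) ≤ μ (A k) := by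
    intro k
    have hij : (2*k+1 : ℕ) ≠ 2*k+2 := by omega
    have hind := (hMindep.indepFun hij).measure_inter_preimage_eq_mul
      (Good ε 0) (Good ε 1) (measurable_Good ε 0) (measurable_Good ε 1)
    rw [hA]
    simp only []
    rw [hind]
    exact mul_le_mul' (hGoodLB _ 0) (hGoodLB _ 1)
  -- real constants
  set x : ℝ≥0∞ := ν (K ε) / 3 with hx
  have hxne0 : x ≠ 0 := by
    rw [hx]
    simp [ENNReal.div_eq_zero_iff, hνK]
  have hxnetop : x ≠ ⊤ := by
    rw [hx]
    exact (ENNReal.div_lt_top (measure_ne_top ν _) (by norm_num)).ne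
  set δ2 : ℝ := (x * x).toReal with hδ2
  have hδ2pos : 0 < δ2 := ENNReal.toReal_pos (mul_ne_zero hxne0 hxne0)
    (ENNReal.mul_ne_top hxnetop hxnetop)
  have hAk_real : ∀ k, δ2 ≤ (μ (A k)).toReal := fun k =>
    ENNReal.toReal_mono (measure_ne_top μ _) (hAlb k)
  have hδ2le1 : δ2 ≤ 1 := by
    have := (hAk_real 0).trans (ENNReal.toReal_le_of_le_ofReal zero_le_one
      (by simpa using prob_le_one (μ := μ) (s := A 0)))
    linarith
  set c : ℝ := 1 - ε^2 * δ2 with hc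
  have hc0 : 0 ≤ c := by nlinarith
  have hc1 : c < 1 := by nlinarith [mul_pos (pow_pos hε 2) hδ2pos]
  -- measurability of S and product representation
  have hSmeas : ∀ n, Measurable (S n) := by
    intro n
    induction n with
    | zero =>
      have : S 0 = fun _ => (1 : Mat) := funext hS0
      rw [this]; exact measurable_const
    | succ n ih =>
      have : S (n+1) = fun ω => M (n+1) ω * S n ω := funext (hSrec n)
      rw [this]; exact measurable_matMul (hMmeas (n+1)) ih
  have hSprod : ∀ n ω, S n ω = prodTo (fun i => M i ω) n := by
    intro n ω
    induction n with
    | zero => simpa [prodTo] using hS0 ω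
    | succ n ih => rw [hSrec n ω, ih]; rfl
  -- independence of D (S 2k) and the contraction indicator
  have hFG : ∀ k, IndepFun (fun ω => Dm (S (2*k) ω))
      (fun ω => 1 - ε^2 * Set.indicator (A k) (fun _ => (1:ℝ)) ω) μ := by
    intro k
    set Sfin : Finset ℕ := Finset.range (2*k+1) with hSfin
    set Tfin : Finset ℕ := {2*k+1, 2*k+2} with hTfin
    have hdis : Disjoint Sfin Tfin := by
      rw [Finset.disjoint_left]
      intro a ha hb
      simp only [hSfin, Finset.mem_range] at ha
      simp only [hTfin, Finset.mem_insert, Finset.mem_singleton] at hb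
      omega
    have hbase := hMindep.indepFun_finset Sfin Tfin hdis hMmeas
    set g : (Sfin → Mat) → ℝ := fun x =>
      Dm (prodTo (fun i => if h : i ∈ Sfin then x ⟨i, h⟩ else 1) (2*k)) with hg
    have hmem1 : (2*k+1 : ℕ) ∈ Tfin := by simp [hTfin]
    have hmem2 : (2*k+2 : ℕ) ∈ Tfin := by simp [hTfin]
    set h : (Tfin → Mat) → ℝ := fun x =>
      1 - ε^2 * (if x ⟨2*k+1, hmem1⟩ ∈ Good ε 0 ∧ x ⟨2*k+2, hmem2⟩ ∈ Good ε 1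
        then (1:ℝ) else 0) with hh
    have hgmeas : Measurable g := by
      refine measurable_Dm.comp (measurable_prodTo (fun i => ?_) (2*k))
      by_cases hi : i ∈ Sfin
      · simpa [hi] using measurable_pi_apply (⟨i, hi⟩ : Sfin)
      · simpa [hi] using (measurable_const : Measurable fun _ : Sfin → Mat => (1:Mat))
    have hhmeas : Measurable h := by
      have hm1 : Measurable fun x : Tfin → Mat => x ⟨2*k+1, hmem1⟩ :=
        measurable_pi_apply _
      have hm2 : Measurable fun x : Tfin → Mat => x ⟨2*k+2, hmem2⟩ :=
        measurable_pi_apply _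
      have hset : MeasurableSet {x : Tfin → Mat |
          x ⟨2*k+1, hmem1⟩ ∈ Good ε 0 ∧ x ⟨2*k+2, hmem2⟩ ∈ Good ε 1} :=
        (hm1 (measurable_Good ε 0)).inter (hm2 (measurable_Good ε 1))
      exact measurable_const.sub
        (measurable_const.mul (Measurable.ite hset measurable_const measurable_const))
    have hcomp := hbase.comp hgmeas hhmeas
    have e1 : (g ∘ fun ω (i : Sfin) => M i ω) = fun ω => Dm (S (2*k) ω) := by
      funext ω
      simp only [Function.comp_apply, hg]
      rw [hSprod (2*k) ω]
      congr 1
      refine prodTo_congr (2*k) fun i hi => ?_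
      have : i ∈ Sfin := by simp [hSfin, Finset.mem_range]; omega
      simp [this]
    have e2 : (h ∘ fun ω (i : Tfin) => M i ω)
        = fun ω => 1 - ε^2 * Set.indicator (A k) (fun _ => (1:ℝ)) ω := by
      funext ω
      simp only [Function.comp_apply, hh, Set.indicator_apply, hA]
      congr 1
    rw [e1, e2] at hcomp
    exact hcomp
  -- monotonicity of Dm (S n)
  have hmono : ∀ᵐ ω ∂μ, ∀ n, Dm (S (n+1) ω) ≤ Dm (S n ω) := by
    filter_upwards [hstoch] with ω hst n
    rw [hSrec n ω]
    exact Dm_mul_le _ _ (hst (n+1))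
  have hbd : ∀ᵐ ω ∂μ, ∀ n, Dm (S n ω) ≤ 2 := by
    filter_upwards [hmono] with ω hm n
    have hanti : Antitone fun n => Dm (S n ω) := antitone_nat_of_succ_le hm
    calc Dm (S n ω) ≤ Dm (S 0 ω) := hanti (Nat.zero_le n)
      _ = Dm 1 := by rw [hS0]
      _ ≤ 2 := Dm_one_le
  -- the key a.e. inequality
  have hkey : ∀ k, ∀ᵐ ω ∂μ, Dm (S (2*k+2) ω) ≤
      (1 - ε^2 * Set.indicator (A k) (fun _ => (1:ℝ)) ω) * Dm (S (2*k) ω) := by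
    intro k
    filter_upwards [hstoch] with ω hst
    by_cases hAk : ω ∈ A k
    · rw [Set.indicator_of_mem hAk]
      have e : S (2*k+2) ω = M (2*k+2) ω * (M (2*k+1) ω * S (2*k) ω) := by
        rw [show 2*k+2 = (2*k+1)+1 from rfl, hSrec, hSrec]
      rw [e]
      have hco := contract hε hε1 (S (2*k) ω) hAk.1 hAk.2
      rw [mul_one]
      exact hco
    · rw [Set.indicator_of_notMem hAk]
      have h1 : Dm (S (2*k+1) ω) ≤ Dm (S (2*k) ω) := by
        rw [hSrec]; exact Dm_mul_le _ _ (hst (2*k+1))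
      have h2 : Dm (S (2*k+2) ω) ≤ Dm (S (2*k+1) ω) := by
        rw [show 2*k+2 = (2*k+1)+1 from rfl, hSrec]
        exact Dm_mul_le _ _ (hst (2*k+2))
      simpa using h2.trans h1
  -- integrability
  set F : ℕ → Ω → ℝ := fun k ω => Dm (S (2*k) ω) with hF
  have hFmeas : ∀ k, Measurable (F k) := fun k => measurable_Dm.comp (hSmeas (2*k))
  have hFint : ∀ k, Integrable (F k) μ := by
    intro k
    refine Integrable.mono' (integrable_const 2) (hFmeas k).aestronglyMeasurable ?_
    filter_upwards [hbd] with ω h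
    rw [Real.norm_eq_abs, abs_of_nonneg (Dm_nonneg _)]
    exact h _
  set G : ℕ → Ω → ℝ := fun k ω => 1 - ε^2 * Set.indicator (A k) (fun _ => (1:ℝ)) ω with hG
  have hGmeas : ∀ k, Measurable (G k) := by
    intro k
    exact measurable_const.sub (measurable_const.mul
      (measurable_const.indicator (hAmeas k)))
  have hGbdd : ∀ k ω, ‖G k ω‖ ≤ 1 := by
    intro k ω
    rw [Real.norm_eq_abs, abs_le]
    by_cases hAk : ω ∈ A k
    · simp only [hG, Set.indicator_of_mem hAk]
      constructor <;> nlinarith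
    · simp only [hG, Set.indicator_of_notMem hAk]
      constructor <;> nlinarith
  have hGint : ∀ k, Integrable (G k) μ := by
    intro k
    refine Integrable.mono' (integrable_const 1) (hGmeas k).aestronglyMeasurable ?_
    exact Filter.Eventually.of_forall (hGbdd k)
  -- the recursion for expectations
  have hrec : ∀ k, ∫ ω, F (k+1) ω ∂μ ≤ c * ∫ ω, F k ω ∂μ := by
    intro k
    have hGF_int : Integrable (fun ω => G k ω * F k ω) μ :=
      Integrable.bdd_mul (hFint k) (hGmeas k).aestronglyMeasurable (Filter.Eventually.of_forall (hGbdd k))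
    have h1 : ∫ ω, F (k+1) ω ∂μ ≤ ∫ ω, G k ω * F k ω ∂μ := by
      refine integral_mono_ae (hFint (k+1)) hGF_int ?_
      have h2k : 2*(k+1) = 2*k+2 := by ring
      filter_upwards [hkey k] with ω h
      simpa [hF, hG, h2k] using h
    have h2 : ∫ ω, G k ω * F k ω ∂μ = (∫ ω, G k ω ∂μ) * ∫ ω, F k ω ∂μ :=
      by have := ((hFG k).symm).integral_mul_eq_mul_integral (hGint k).1 (hFint k).1; exact this
    have h3 : ∫ ω, G k ω ∂μ = 1 - ε^2 * (μ (A k)).toReal := by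
      rw [hG]
      simp only []
      rw [integral_sub (integrable_const 1) (Integrable.const_mul
        ((integrable_const 1).indicator (hAmeas k)) (ε^2))]
      rw [integral_const, integral_const_mul, integral_indicator_const _ (hAmeas k)]
      simp [measure_univ, measureReal_def]
    have h4 : ∫ ω, G k ω ∂μ ≤ c := by
      rw [h3, hc]
      have := hAk_real k
      nlinarith [sq_nonneg ε]
    have hFnonneg : 0 ≤ ∫ ω, F k ω ∂μ := integral_nonneg fun ω => Dm_nonneg _
    calc ∫ ω, F (k+1) ω ∂μ ≤ (∫ ω, G k ω ∂μ) * ∫ ω, F k ω ∂μ := h1.trans h2.le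
      _ ≤ c * ∫ ω, F k ω ∂μ := mul_le_mul_of_nonneg_right h4 hFnonneg
  have hEk : ∀ k, ∫ ω, F k ω ∂μ ≤ 2 * c^k := by
    intro k
    induction k with
    | zero =>
      have hF0 : F 0 = fun _ => Dm 1 := by
        funext ω; simp [hF, hS0 ω]
      rw [hF0, integral_const]
      simp [measure_univ]
      linarith [Dm_one_le]
    | succ k ih =>
      calc ∫ ω, F (k+1) ω ∂μ ≤ c * ∫ ω, F k ω ∂μ := hrec k
        _ ≤ c * (2 * c^k) := mul_le_mul_of_nonneg_left ih hc0
        _ = 2 * c^(k+1) := by ring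
  -- passing to the limit
  have hDL_le : ∀ᵐ ω ∂μ, ∀ n, Dm (L ω) ≤ Dm (S n ω) := by
    filter_upwards [hconv, hmono] with ω hcω hm
    intro n
    have htd : Tendsto (fun k => Dm (S (φ k) ω)) atTop (nhds (Dm (L ω))) := tendsto_Dm hcω
    refine le_of_tendsto htd ?_
    have hanti : Antitone fun n => Dm (S n ω) := antitone_nat_of_succ_le hm
    filter_upwards [eventually_ge_atTop n] with k hk
    exact hanti (le_trans hk hφ.le_apply)
  have hDLsm : AEStronglyMeasurable (fun ω => Dm (L ω)) μ := by
    refine aestronglyMeasurable_of_tendsto_ae atTop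
      (fun k => (measurable_Dm.comp (hSmeas (φ k))).aestronglyMeasurable) ?_
    filter_upwards [hconv] with ω h
    exact tendsto_Dm h
  have hDLint : Integrable (fun ω => Dm (L ω)) μ := by
    refine Integrable.mono' (integrable_const 2) hDLsm ?_
    filter_upwards [hDL_le, hbd] with ω h1 h2
    rw [Real.norm_eq_abs, abs_of_nonneg (Dm_nonneg _)]
    exact (h1 0).trans (h2 0)
  have hle : ∀ k, ∫ ω, Dm (L ω) ∂μ ≤ 2 * c^k := by
    intro k
    refine le_trans ?_ (hEk k)
    refine integral_mono_ae hDLint (hFint k) ?_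
    filter_upwards [hDL_le] with ω h
    exact h (2*k)
  have hlim : Tendsto (fun k : ℕ => 2 * c^k) atTop (nhds 0) := by
    have := (tendsto_pow_atTop_nhds_zero_of_lt_one hc0 hc1).const_mul (2:ℝ)
    simpa using this
  have hint0 : ∫ ω, Dm (L ω) ∂μ = 0 :=
    le_antisymm (ge_of_tendsto' hlim hle) (integral_nonneg fun ω => Dm_nonneg _)
  have hDL0 : ∀ᵐ ω ∂μ, Dm (L ω) = 0 := by
    have := (integral_eq_zero_iff_of_nonneg_ae
      (Filter.Eventually.of_forall fun ω => Dm_nonneg (L ω)) hDLint).mp hint0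
    filter_upwards [this] with ω h
    exact h
  filter_upwards [hDL0] with ω h
  have hrow : ∀ i j : Fin 3, L ω i = L ω j := by
    intro i j
    have h1 : ‖L ω i - L ω j‖ ≤ 0 := h ▸ row_sub_le (L ω) i j
    have h2 : ‖L ω i - L ω j‖ = 0 := le_antisymm h1 (norm_nonneg _)
    exact sub_eq_zero.mp (norm_eq_zero.mp h2)
  exact ⟨hrow 0 1, hrow 1 2⟩
end

section
/- Let (Mₙ)_{n≥1} be i.i.d. random matrices as above. Then the product Sₙ = Mₙ⋯M₁ converges almost surely to a random matrix S all three of whose rows are identical. -/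
open MeasureTheory ProbabilityTheory Filter

namespace MPC

noncomputable def D (A : Matrix (Fin 3) (Fin 3) ℝ) : ℝ :=
  max (max ‖A 0 - A 1‖ ‖A 0 - A 2‖) ‖A 1 - A 2‖

lemma D_nonneg (A : Matrix (Fin 3) (Fin 3) ℝ) : 0 ≤ D A :=
  le_trans (norm_nonneg _) (le_max_right _ _)

lemma norm_row_sub_le (A : Matrix (Fin 3) (Fin 3) ℝ) (j k : Fin 3) :
    ‖A j - A k‖ ≤ D A := by
  have h01 : ‖A 0 - A 1‖ ≤ D A := le_trans (le_max_left _ _) (le_max_left _ _)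
  have h02 : ‖A 0 - A 2‖ ≤ D A := le_trans (le_max_right _ _) (le_max_left _ _)
  have h12 : ‖A 1 - A 2‖ ≤ D A := le_max_right _ _
  fin_cases j <;> fin_cases k <;>
    simp_all [norm_sub_rev, D_nonneg A, sub_self] <;>
    first
      | exact D_nonneg A
      | (rw [norm_sub_rev]; assumption)

lemma D_le {A : Matrix (Fin 3) (Fin 3) ℝ} {C : ℝ}
    (h01 : ‖A 0 - A 1‖ ≤ C) (h02 : ‖A 0 - A 2‖ ≤ C) (h12 : ‖A 1 - A 2‖ ≤ C) :
    D A ≤ C := max_le (max_le h01 h02) h12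

lemma rowReplace_mul_apply (p : Fin 3 → ℝ) (i : Fin 3)
    (B : Matrix (Fin 3) (Fin 3) ℝ) (j : Fin 3) :
    (rowReplaceMatrix p i * B) j =
      if j = i then p 0 • B 0 + p 1 • B 1 + p 2 • B 2 else B j := by
  funext c
  by_cases h : j = i
  · subst h
    simp [Matrix.mul_apply, rowReplaceMatrix, Fin.sum_univ_three, smul_eq_mul]
  · simp only [if_neg h]
    rw [Matrix.mul_apply]
    fin_cases j <;> fin_cases i <;>
      simp_all [rowReplaceMatrix, Fin.sum_univ_three]

lemma combo_dist {p : Fin 3 → ℝ} (hp : ∀ c, 0 ≤ p c) (hsum : p 0 + p 1 + p 2 = 1)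
    {a0 a1 a2 x : Fin 3 → ℝ} {C : ℝ}
    (h0 : ‖a0 - x‖ ≤ C) (h1 : ‖a1 - x‖ ≤ C) (h2 : ‖a2 - x‖ ≤ C) :
    ‖(p 0 • a0 + p 1 • a1 + p 2 • a2) - x‖ ≤ C := by
  have key : (p 0 • a0 + p 1 • a1 + p 2 • a2) - x
      = p 0 • (a0 - x) + p 1 • (a1 - x) + p 2 • (a2 - x) := by
    have hx : p 0 • x + p 1 • x + p 2 • x = x := by
      rw [← add_smul, ← add_smul, hsum, one_smul]
    rw [smul_sub, smul_sub, smul_sub]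
    rw [show p 0 • a0 - p 0 • x + (p 1 • a1 - p 1 • x) + (p 2 • a2 - p 2 • x)
        = p 0 • a0 + p 1 • a1 + p 2 • a2 - (p 0 • x + p 1 • x + p 2 • x) by abel, hx]
  rw [key]
  calc ‖p 0 • (a0 - x) + p 1 • (a1 - x) + p 2 • (a2 - x)‖
      ≤ ‖p 0 • (a0 - x)‖ + ‖p 1 • (a1 - x)‖ + ‖p 2 • (a2 - x)‖ := norm_add₃_le
    _ ≤ p 0 * C + p 1 * C + p 2 * C := by
        gcongr <;> rw [norm_smul, Real.norm_of_nonneg (by apply hp)] <;>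
          exact mul_le_mul_of_nonneg_left (by assumption) (by apply hp)
    _ = C := by rw [← add_mul, ← add_mul, hsum, one_mul]

/-- one admissible step -/
def StepRel (A B : Matrix (Fin 3) (Fin 3) ℝ) : Prop :=
  ∃ p : Fin 3 → ℝ, ∃ i : Fin 3, (∀ c, 0 ≤ p c) ∧ p 0 + p 1 + p 2 = 1 ∧
    B = rowReplaceMatrix p i * A

variable {A : ℕ → Matrix (Fin 3) (Fin 3) ℝ}

lemma key (h : ∀ n, StepRel (A n) (A (n + 1))) (m : ℕ) :
    ∀ n, m ≤ n → ∀ j k, ‖A n j - A m k‖ ≤ D (A m) := by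
  intro n hn
  induction n, hn using Nat.le_induction with
  | base => exact fun j k => norm_row_sub_le (A m) j k
  | succ n hmn ih =>
    intro j k
    obtain ⟨p, i, hp, hsum, hstep⟩ := h n
    rw [hstep, rowReplace_mul_apply]
    by_cases hji : j = i
    · rw [if_pos hji]
      exact combo_dist hp hsum (ih 0 k) (ih 1 k) (ih 2 k)
    · rw [if_neg hji]; exact ih j k

lemma key2 (h : ∀ n, StepRel (A n) (A (n + 1))) (m : ℕ) :
    ∀ n, m ≤ n → ∀ j k, ‖A n j - A n k‖ ≤ D (A m) := by
  intro n hn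
  induction n, hn using Nat.le_induction with
  | base => exact fun j k => norm_row_sub_le (A m) j k
  | succ n hmn ih =>
    intro j k
    obtain ⟨p, i, hp, hsum, hstep⟩ := h n
    rw [hstep]
    have hrow : ∀ l : Fin 3, ‖A n l - (rowReplaceMatrix p i * A n) k‖ ≤ D (A m) := by
      intro l
      rw [rowReplace_mul_apply]
      by_cases hki : k = i
      · rw [if_pos hki, ← norm_sub_rev]
        exact combo_dist hp hsum (ih 0 l) (ih 1 l) (ih 2 l)
      · rw [if_neg hki]; exact ih l k
    rw [rowReplace_mul_apply]
    by_cases hji : j = i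
    · rw [if_pos hji]
      exact combo_dist hp hsum (hrow 0) (hrow 1) (hrow 2)
    · rw [if_neg hji]; exact hrow j

lemma D_mono (h : ∀ n, StepRel (A n) (A (n + 1))) {m n : ℕ} (hmn : m ≤ n) :
    D (A n) ≤ D (A m) :=
  D_le (key2 h m n hmn 0 1) (key2 h m n hmn 0 2) (key2 h m n hmn 1 2)

lemma two_term_bound {s t : ℝ} {u v : Fin 3 → ℝ} {Dn C : ℝ} (hs : 0 ≤ s) (ht : 0 ≤ t)
    (hu : ‖u‖ ≤ Dn) (hv : ‖v‖ ≤ Dn) (hst : s + t ≤ C) (hDn : 0 ≤ Dn) :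
    ‖s • u + t • v‖ ≤ C * Dn := by
  calc ‖s • u + t • v‖ ≤ ‖s • u‖ + ‖t • v‖ := norm_add_le _ _
    _ = s * ‖u‖ + t * ‖v‖ := by
        rw [norm_smul, norm_smul, Real.norm_of_nonneg hs, Real.norm_of_nonneg ht]
    _ ≤ C * Dn := by nlinarith [norm_nonneg u, norm_nonneg v]

def BlockGood (ε : ℝ) (A : ℕ → Matrix (Fin 3) (Fin 3) ℝ) (n : ℕ) : Prop :=
  ∃ p q r : Fin 3 → ℝ,
    (∀ c, ε ≤ p c) ∧ p 0 + p 1 + p 2 = 1 ∧ A (n + 1) = rowReplaceMatrix p 0 * A n ∧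
    (∀ c, ε ≤ q c) ∧ q 0 + q 1 + q 2 = 1 ∧ A (n + 2) = rowReplaceMatrix q 1 * A (n + 1) ∧
    (∀ c, ε ≤ r c) ∧ r 0 + r 1 + r 2 = 1 ∧ A (n + 3) = rowReplaceMatrix r 2 * A (n + 2)

lemma contract (h : ∀ n, StepRel (A n) (A (n + 1))) {ε : ℝ} (hε : 0 < ε)
    {n : ℕ} (hb : BlockGood ε A n) :
    D (A (n + 3)) ≤ (1 - ε) * D (A n) := by
  obtain ⟨p, q, r, hp, hps, h1, hq, hqs, h2, hr, hrs, h3⟩ := hb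
  have hDn := D_nonneg (A n)
  have e10 : A (n + 1) 0 = p 0 • A n 0 + p 1 • A n 1 + p 2 • A n 2 := by
    rw [h1, rowReplace_mul_apply]; simp
  have e11 : A (n + 1) 1 = A n 1 := by rw [h1, rowReplace_mul_apply]; simp
  have e12 : A (n + 1) 2 = A n 2 := by rw [h1, rowReplace_mul_apply]; simp
  have e20 : A (n + 2) 0 = A (n + 1) 0 := by rw [h2, rowReplace_mul_apply]; simp
  have e21 : A (n + 2) 1 = q 0 • A (n + 1) 0 + q 1 • A (n + 1) 1 + q 2 • A (n + 1) 2 := by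
    rw [h2, rowReplace_mul_apply]; simp
  have e22 : A (n + 2) 2 = A (n + 1) 2 := by rw [h2, rowReplace_mul_apply]; simp
  have e30 : A (n + 3) 0 = A (n + 2) 0 := by rw [h3, rowReplace_mul_apply]; simp
  have e31 : A (n + 3) 1 = A (n + 2) 1 := by rw [h3, rowReplace_mul_apply]; simp
  have e32 : A (n + 3) 2 = r 0 • A (n + 2) 0 + r 1 • A (n + 2) 1 + r 2 • A (n + 2) 2 := by
    rw [h3, rowReplace_mul_apply]; simp
  have ha1b0 : ‖A n 1 - A (n + 1) 0‖ ≤ D (A n) := by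
    rw [norm_sub_rev]; exact key h n (n + 1) (by omega) 0 1
  have ha2b0 : ‖A n 2 - A (n + 1) 0‖ ≤ D (A n) := by
    rw [norm_sub_rev]; exact key h n (n + 1) (by omega) 0 2
  have ha2b1 : ‖A n 2 - A (n + 2) 1‖ ≤ D (A n) := by
    rw [norm_sub_rev]; exact key h n (n + 2) (by omega) 1 2
  have hb1b0 : ‖A (n + 2) 1 - A (n + 1) 0‖ ≤ (1 - ε) * D (A n) := by
    have expand : A (n + 2) 1 - A (n + 1) 0
        = q 1 • (A n 1 - A (n + 1) 0) + q 2 • (A n 2 - A (n + 1) 0) := by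
      rw [e21, e11, e12]
      rw [show q 0 = 1 - q 1 - q 2 by linarith, sub_smul, sub_smul, one_smul,
        smul_sub, smul_sub]
      abel
    rw [expand]
    exact two_term_bound (le_trans hε.le (hq 1)) (le_trans hε.le (hq 2)) ha1b0 ha2b0
      (by linarith [hq 0]) hDn
  have hb1b0' : ‖A (n + 2) 1 - A (n + 1) 0‖ ≤ D (A n) := by nlinarith
  have hb2b0 : ‖A (n + 3) 2 - A (n + 1) 0‖ ≤ (1 - ε) * D (A n) := by
    have expand : A (n + 3) 2 - A (n + 1) 0
        = r 1 • (A (n + 2) 1 - A (n + 1) 0) + r 2 • (A n 2 - A (n + 1) 0) := by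
      rw [e32, e20, e22, e12]
      rw [show r 0 = 1 - r 1 - r 2 by linarith, sub_smul, sub_smul, one_smul,
        smul_sub, smul_sub]
      abel
    rw [expand]
    exact two_term_bound (le_trans hε.le (hr 1)) (le_trans hε.le (hr 2)) hb1b0' ha2b0
      (by linarith [hr 0]) hDn
  have hb2b1 : ‖A (n + 3) 2 - A (n + 2) 1‖ ≤ (1 - ε) * D (A n) := by
    have expand : A (n + 3) 2 - A (n + 2) 1
        = r 0 • (A (n + 1) 0 - A (n + 2) 1) + r 2 • (A n 2 - A (n + 2) 1) := by
      rw [e32, e20, e22, e12]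
      rw [show r 1 = 1 - r 0 - r 2 by linarith, sub_smul, sub_smul, one_smul,
        smul_sub, smul_sub]
      abel
    have hb0b1 : ‖A (n + 1) 0 - A (n + 2) 1‖ ≤ D (A n) := by
      rw [norm_sub_rev]; exact hb1b0'
    rw [expand]
    exact two_term_bound (le_trans hε.le (hr 0)) (le_trans hε.le (hr 2)) hb0b1 ha2b1
      (by linarith [hr 1]) hDn
  apply D_le
  · rw [e30, e31, e20, norm_sub_rev]; exact hb1b0
  · rw [e30, e20, norm_sub_rev]; exact hb2b0
  · rw [e31, norm_sub_rev]; exact hb2b1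

lemma converge {A : ℕ → Matrix (Fin 3) (Fin 3) ℝ}
    (h : ∀ n, StepRel (A n) (A (n + 1))) {ε : ℝ} (hε : 0 < ε) (hε1 : ε ≤ 1)
    (hbl : ∀ K : ℕ, ∃ k, K ≤ k ∧ BlockGood ε A (3 * k)) :
    ∃ L : Matrix (Fin 3) (Fin 3) ℝ,
      Tendsto A atTop (nhds L) ∧ L 0 = L 1 ∧ L 1 = L 2 := by
  -- D (A n) tends to 0
  have step1 : ∀ j : ℕ, ∃ N, D (A N) ≤ (1 - ε) ^ j * D (A 0) := by
    intro j
    induction j with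
    | zero => exact ⟨0, by simp⟩
    | succ j ih =>
      obtain ⟨N, hN⟩ := ih
      obtain ⟨k, hk, hbk⟩ := hbl N
      refine ⟨3 * k + 3, ?_⟩
      have h3k : N ≤ 3 * k := by omega
      calc D (A (3 * k + 3)) ≤ (1 - ε) * D (A (3 * k)) := contract h hε hbk
        _ ≤ (1 - ε) * D (A N) := by
            apply mul_le_mul_of_nonneg_left (D_mono h h3k); linarith
        _ ≤ (1 - ε) * ((1 - ε) ^ j * D (A 0)) := by
            apply mul_le_mul_of_nonneg_left hN; linarith
        _ = (1 - ε) ^ (j + 1) * D (A 0) := by ring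
  have hpow : Tendsto (fun j : ℕ => (1 - ε) ^ j * D (A 0)) atTop (nhds 0) := by
    have := (tendsto_pow_atTop_nhds_zero_of_lt_one (by linarith : (0:ℝ) ≤ 1 - ε)
      (by linarith : (1:ℝ) - ε < 1)).mul_const (D (A 0))
    simpa using this
  have hDsmall : ∀ δ : ℝ, 0 < δ → ∃ N, ∀ n, N ≤ n → D (A n) < δ := by
    intro δ hδ
    have hev : ∀ᶠ j : ℕ in atTop, (1 - ε) ^ j * D (A 0) < δ :=
      hpow.eventually (eventually_lt_nhds hδ)
    obtain ⟨j, hj⟩ := hev.exists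
    obtain ⟨N, hN⟩ := step1 j
    exact ⟨N, fun n hn => lt_of_le_of_lt (le_trans (D_mono h hn) hN) hj⟩
  have hDtends : Tendsto (fun n => D (A n)) atTop (nhds 0) := by
    rw [Metric.tendsto_atTop]
    intro δ hδ
    obtain ⟨N, hN⟩ := hDsmall δ hδ
    exact ⟨N, fun n hn => by
      rw [Real.dist_eq, sub_zero, abs_of_nonneg (D_nonneg _)]; exact hN n hn⟩
  -- each row is Cauchy
  have hrowC : ∀ j : Fin 3, ∃ v : Fin 3 → ℝ,
      Tendsto (fun n => A n j) atTop (nhds v) := by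
    intro j
    have : CauchySeq (fun n => A n j) := by
      rw [Metric.cauchySeq_iff']
      intro δ hδ
      obtain ⟨N, hN⟩ := hDsmall δ hδ
      refine ⟨N, fun n hn => ?_⟩
      rw [dist_eq_norm]
      exact lt_of_le_of_lt (key h N n hn j j) (hN N le_rfl)
    exact cauchySeq_tendsto_of_complete this
  choose v hv using hrowC
  refine ⟨fun j => v j, ?_, ?_, ?_⟩
  · -- convergence in the (pi) topology on matrices
    have : Tendsto A atTop (nhds (fun j => v j)) := by
      apply tendsto_pi_nhds.mpr
      intro j
      exact hv j
    exact this
  · -- rows 0 and 1 of the limit coincide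
    have h1 : Tendsto (fun n => ‖A n 0 - A n 1‖) atTop (nhds ‖v 0 - v 1‖) :=
      ((hv 0).sub (hv 1)).norm
    have h2 : ‖v 0 - v 1‖ ≤ 0 :=
      le_of_tendsto_of_tendsto' h1 hDtends (fun n => norm_row_sub_le (A n) 0 1)
    have := norm_le_zero_iff.mp h2
    exact sub_eq_zero.mp this
  · have h1 : Tendsto (fun n => ‖A n 1 - A n 2‖) atTop (nhds ‖v 1 - v 2‖) :=
      ((hv 1).sub (hv 2)).norm
    have h2 : ‖v 1 - v 2‖ ≤ 0 :=
      le_of_tendsto_of_tendsto' h1 hDtends (fun n => norm_row_sub_le (A n) 1 2)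
    exact sub_eq_zero.mp (norm_le_zero_iff.mp h2)

lemma meas_entry (r c : Fin 3) :
    Measurable fun A : Matrix (Fin 3) (Fin 3) ℝ => A r c := by
  exact ((measurable_pi_apply c).comp (measurable_pi_apply r) :
    Measurable fun A : Fin 3 → Fin 3 → ℝ => A r c)

lemma meas_rowReplace :
    Measurable fun q : (Fin 3 → ℝ) × Fin 3 => rowReplaceMatrix q.1 q.2 := by
  apply measurable_pi_lambda
  intro r
  apply measurable_pi_lambda
  intro c
  show Measurable fun q : (Fin 3 → ℝ) × Fin 3 =>
    if r = q.2 then q.1 c else if r = c then 1 else 0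
  apply Measurable.ite
  · have : {q : (Fin 3 → ℝ) × Fin 3 | r = q.2} = Prod.snd ⁻¹' {r} := by
      ext q; simp [eq_comm]
    rw [this]
    exact measurable_snd (MeasurableSet.singleton r)
  · exact (measurable_pi_apply c).comp measurable_fst
  · exact measurable_const

/-- matrices of the form `rowReplaceMatrix p i` with `p ≥ ε` entrywise summing to 1 -/
def goodMatrix (ε : ℝ) (i : Fin 3) : Set (Matrix (Fin 3) (Fin 3) ℝ) :=
  {A | A = rowReplaceMatrix (A i) i ∧ (∀ c, ε ≤ A i c) ∧ A i 0 + A i 1 + A i 2 = 1}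

lemma meas_goodMatrix (ε : ℝ) (i : Fin 3) : MeasurableSet (goodMatrix ε i) := by
  have h1 : MeasurableSet {A : Matrix (Fin 3) (Fin 3) ℝ | A = rowReplaceMatrix (A i) i} := by
    have heq : {A : Matrix (Fin 3) (Fin 3) ℝ | A = rowReplaceMatrix (A i) i}
        = ⋂ r, ⋂ c, {A : Matrix (Fin 3) (Fin 3) ℝ |
            A r c = if r = i then A i c else if r = c then 1 else 0} := by
      ext A
      simp only [Set.mem_setOf_eq, Set.mem_iInter]
      constructor
      · intro hA r c
        conv_lhs => rw [hA]
        rfl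
      · intro hA; funext r c; rw [hA r c]; rfl
    rw [heq]
    refine MeasurableSet.iInter fun r => MeasurableSet.iInter fun c => ?_
    exact measurableSet_eq_fun (meas_entry r c)
      (Measurable.ite (MeasurableSet.const _) (meas_entry i c) measurable_const)
  have h2 : MeasurableSet {A : Matrix (Fin 3) (Fin 3) ℝ | ∀ c, ε ≤ A i c} := by
    have heq : {A : Matrix (Fin 3) (Fin 3) ℝ | ∀ c, ε ≤ A i c}
        = ⋂ c, {A : Matrix (Fin 3) (Fin 3) ℝ | ε ≤ A i c} := by
      ext A; simp
    rw [heq]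
    exact MeasurableSet.iInter fun c => measurableSet_le measurable_const (meas_entry i c)
  have h3 : MeasurableSet {A : Matrix (Fin 3) (Fin 3) ℝ | A i 0 + A i 1 + A i 2 = 1} :=
    measurableSet_eq_fun (((meas_entry i 0).add (meas_entry i 1)).add (meas_entry i 2))
      measurable_const
  have : goodMatrix ε i = {A : Matrix (Fin 3) (Fin 3) ℝ | A = rowReplaceMatrix (A i) i}
      ∩ ({A | ∀ c, ε ≤ A i c} ∩ {A | A i 0 + A i 1 + A i 2 = 1}) := by
    ext A; simp [goodMatrix, Set.mem_setOf_eq, and_assoc]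
  rw [this]
  exact h1.inter (h2.inter h3)

lemma mem_goodMatrix_rowReplace {ε : ℝ} {p : Fin 3 → ℝ} {i : Fin 3}
    (hp : ∀ c, ε ≤ p c) (hsum : p 0 + p 1 + p 2 = 1) :
    rowReplaceMatrix p i ∈ goodMatrix ε i := by
  have hrow : (rowReplaceMatrix p i) i = p := by
    funext c; simp [rowReplaceMatrix]
  refine ⟨?_, ?_, ?_⟩
  · rw [hrow]
  · rw [hrow]; exact hp
  · rw [hrow]; exact hsum

lemma law_goodMatrix (ν : Measure (Fin 3 → ℝ)) [IsProbabilityMeasure ν]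
    {ε : ℝ} (i : Fin 3) (T : Set (Fin 3 → ℝ)) (hT : MeasurableSet T)
    (hTsub : T ⊆ {p | (∀ c, ε ≤ p c) ∧ p 0 + p 1 + p 2 = 1}) :
    ν T * (3 : ENNReal)⁻¹ ≤ randomMatrixLaw ν (goodMatrix ε i) := by
  rw [randomMatrixLaw, Measure.map_apply meas_rowReplace (meas_goodMatrix ε i)]
  have hsub : T ×ˢ ({i} : Set (Fin 3)) ⊆
      (fun q : (Fin 3 → ℝ) × Fin 3 => rowReplaceMatrix q.1 q.2) ⁻¹' goodMatrix ε i := by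
    rintro ⟨p, j⟩ ⟨hpT, hj⟩
    simp only [Set.mem_singleton_iff] at hj
    subst hj
    exact mem_goodMatrix_rowReplace (hTsub hpT).1 (hTsub hpT).2
  calc ν T * (3 : ENNReal)⁻¹
      = (ν.prod (PMF.uniformOfFintype (Fin 3)).toMeasure) (T ×ˢ ({i} : Set (Fin 3))) := by
        rw [Measure.prod_prod]
        congr 1
        rw [PMF.toMeasure_apply_singleton _ _ (MeasurableSet.singleton i)]
        simp [PMF.uniformOfFintype_apply]
    _ ≤ _ := measure_mono hsub

end MPC

open MPC

/-- Let `(Mₙ)` be i.i.d. random stochastic matrices, each the identity with a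
uniformly chosen row replaced by an independent splitting ratio drawn from `ν`.
Then the product `Sₙ = Mₙ ⋯ M₁` converges almost surely to a random matrix all
three of whose rows are identical. -/
theorem matrix_product_converges_rows_equal
    {Ω : Type*} [MeasurableSpace Ω] (μ : Measure Ω) [IsProbabilityMeasure μ]
    (ν : Measure (Fin 3 → ℝ)) [IsProbabilityMeasure ν]
    (hνexch : ∀ σ : Equiv.Perm (Fin 3),
      Measure.map (fun p => p ∘ σ) ν = ν)
    (hνpos : ∀ᵐ p ∂ν, ∀ i, 0 < p i)
    (hνsum : ∀ᵐ p ∂ν, p 0 + p 1 + p 2 = 1)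
    (M : ℕ → Ω → Matrix (Fin 3) (Fin 3) ℝ)
    (hMmeas : ∀ n, Measurable (M n))
    (hMindep : iIndepFun M μ)
    (hMlaw : ∀ n, Measure.map (M n) μ = randomMatrixLaw ν)
    (S : ℕ → Ω → Matrix (Fin 3) (Fin 3) ℝ)
    (hS0 : ∀ ω, S 0 ω = 1)
    (hSrec : ∀ n ω, S (n + 1) ω = M (n + 1) ω * S n ω) :
    ∃ Slim : Ω → Matrix (Fin 3) (Fin 3) ℝ,
      ∀ᵐ ω ∂μ, Tendsto (fun n => S n ω) atTop (nhds (Slim ω)) ∧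
        Slim ω 0 = Slim ω 1 ∧ Slim ω 1 = Slim ω 2 := by
  classical
  -- measurable "simplex-like" sets of splitting ratios
  have measU : ∀ ε : ℝ, MeasurableSet {p : Fin 3 → ℝ | (∀ c, ε ≤ p c) ∧ p 0 + p 1 + p 2 = 1} := by
    intro ε
    have heq : {p : Fin 3 → ℝ | (∀ c, ε ≤ p c) ∧ p 0 + p 1 + p 2 = 1}
        = (⋂ c, {p : Fin 3 → ℝ | ε ≤ p c}) ∩ {p : Fin 3 → ℝ | p 0 + p 1 + p 2 = 1} := by
      ext p; simp [Set.mem_iInter]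
    rw [heq]
    exact (MeasurableSet.iInter fun c =>
        measurableSet_le measurable_const (measurable_pi_apply c)).inter
      (measurableSet_eq_fun
        (((measurable_pi_apply 0).add (measurable_pi_apply 1)).add (measurable_pi_apply 2))
        measurable_const)
  -- almost every ratio is positive and sums to 1
  have haeν : ∀ᵐ p ∂ν, (∀ c, (0:ℝ) < p c) ∧ p 0 + p 1 + p 2 = 1 := by
    filter_upwards [hνpos, hνsum] with p h1 h2 using ⟨h1, h2⟩
  -- choose ε > 0 with ν (U ε) ≠ 0
  obtain ⟨k0, hk0⟩ : ∃ k0 : ℕ,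
      ν {p : Fin 3 → ℝ | (∀ c, 1/(k0+1 : ℝ) ≤ p c) ∧ p 0 + p 1 + p 2 = 1} ≠ 0 := by
    by_contra hcon
    push_neg at hcon
    have hcov : ∀ᵐ p ∂ν, p ∈ ⋃ k : ℕ,
        {p : Fin 3 → ℝ | (∀ c, 1/(k+1 : ℝ) ≤ p c) ∧ p 0 + p 1 + p 2 = 1} := by
      filter_upwards [haeν] with p hp
      have hmin : 0 < min (p 0) (min (p 1) (p 2)) :=
        lt_min (hp.1 0) (lt_min (hp.1 1) (hp.1 2))
      obtain ⟨k, hk⟩ := exists_nat_one_div_lt hmin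
      refine Set.mem_iUnion.mpr ⟨k, ⟨fun c => ?_, hp.2⟩⟩
      fin_cases c
      · exact le_trans hk.le (le_trans (min_le_left _ _) le_rfl)
      · exact le_trans hk.le (le_trans (min_le_right _ _) (min_le_left _ _))
      · exact le_trans hk.le (le_trans (min_le_right _ _) (min_le_right _ _))
    have h1 : ν (⋃ k : ℕ,
        {p : Fin 3 → ℝ | (∀ c, 1/(k+1 : ℝ) ≤ p c) ∧ p 0 + p 1 + p 2 = 1}) = 1 := by
      rw [← measure_univ (μ := ν)]
      exact ((ae_mem_iff_measure_eq
        ((MeasurableSet.iUnion fun k => measU _).nullMeasurableSet)).mp hcov)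
    have h0 : ν (⋃ k : ℕ,
        {p : Fin 3 → ℝ | (∀ c, 1/(k+1 : ℝ) ≤ p c) ∧ p 0 + p 1 + p 2 = 1}) = 0 :=
      measure_iUnion_null fun k => hcon k
    rw [h0] at h1
    exact zero_ne_one h1
  set ε : ℝ := 1/(k0+1 : ℝ) with hεdef
  have hε : 0 < ε := by positivity
  have hε1 : ε ≤ 1 := by
    rw [hεdef, div_le_one (by positivity)]
    linarith [Nat.cast_nonneg (α := ℝ) k0]
  set U : Set (Fin 3 → ℝ) := {p : Fin 3 → ℝ | (∀ c, ε ≤ p c) ∧ p 0 + p 1 + p 2 = 1} with hUdef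
  have hU : ν U ≠ 0 := hk0
  -- the per-step good sets (row to be replaced depends on index mod 3)
  set rowOf : ℕ → Fin 3 := fun n => if n % 3 = 1 then 0 else if n % 3 = 2 then 1 else 2
    with hrowOf
  set cs : ℕ → Set (Matrix (Fin 3) (Fin 3) ℝ) := fun n => goodMatrix ε (rowOf n) with hcs
  have hrow1 : ∀ k : ℕ, rowOf (3 * k + 1) = 0 := by
    intro k; simp only [hrowOf]; rw [show (3 * k + 1) % 3 = 1 by omega]; rfl
  have hrow2 : ∀ k : ℕ, rowOf (3 * k + 2) = 1 := by
    intro k; simp only [hrowOf]; rw [show (3 * k + 2) % 3 = 2 by omega]; rfl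
  have hrow3 : ∀ k : ℕ, rowOf (3 * k + 3) = 2 := by
    intro k; simp only [hrowOf]; rw [show (3 * k + 3) % 3 = 0 by omega]; rfl
  -- lower bound on the measure of each per-step event
  have hmuA : ∀ n : ℕ, μ (M n ⁻¹' cs n) = randomMatrixLaw ν (cs n) := by
    intro n
    rw [← hMlaw n, Measure.map_apply (hMmeas n) (meas_goodMatrix ε (rowOf n))]
  have hAlow : ∀ n : ℕ, ν U * (3 : ENNReal)⁻¹ ≤ μ (M n ⁻¹' cs n) := by
    intro n
    rw [hmuA n]
    exact law_goodMatrix ν (rowOf n) U (measU ε) (fun p hp => hp)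
  -- the block events
  set E : ℕ → Set Ω := fun k =>
    (M (3*k+1) ⁻¹' cs (3*k+1)) ∩ (M (3*k+2) ⁻¹' cs (3*k+2)) ∩ (M (3*k+3) ⁻¹' cs (3*k+3))
    with hE
  have hEmeas : ∀ k, MeasurableSet (E k) := by
    intro k
    exact (((hMmeas _) (meas_goodMatrix _ _)).inter
      ((hMmeas _) (meas_goodMatrix _ _))).inter ((hMmeas _) (meas_goodMatrix _ _))
  -- independence product rule for intersections of per-step events
  have hprod : ∀ s : Finset ℕ,
      μ (⋂ n ∈ s, M n ⁻¹' cs n) = ∏ n ∈ s, μ (M n ⁻¹' cs n) :=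
    fun s => hMindep.measure_inter_preimage_eq_mul s
      (fun n _ => meas_goodMatrix ε (rowOf n))
  -- blocks as finsets of indices
  set blk : ℕ → Finset ℕ := fun k => {3*k+1, 3*k+2, 3*k+3} with hblk
  have hblk_disj : ∀ x ∈ (Set.univ : Set ℕ), ∀ y ∈ (Set.univ : Set ℕ), x ≠ y →
      Disjoint (blk x) (blk y) := by
    intro x _ y _ hxy
    simp only [hblk, Finset.disjoint_left, Finset.mem_insert, Finset.mem_singleton]
    omega
  have hEbiInter : ∀ k, E k = ⋂ n ∈ blk k, M n ⁻¹' cs n := by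
    intro k
    ext ω
    simp only [hE, hblk, Set.mem_inter_iff, Set.mem_iInter, Finset.mem_insert,
      Finset.mem_singleton, Set.mem_preimage]
    constructor
    · rintro ⟨⟨h1, h2⟩, h3⟩ n hn
      rcases hn with rfl | rfl | rfl
      · exact h1
      · exact h2
      · exact h3
    · intro h
      exact ⟨⟨h _ (Or.inl rfl), h _ (Or.inr (Or.inl rfl))⟩, h _ (Or.inr (Or.inr rfl))⟩
  have hμE : ∀ k, μ (E k)
      = μ (M (3*k+1) ⁻¹' cs (3*k+1)) * μ (M (3*k+2) ⁻¹' cs (3*k+2))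
        * μ (M (3*k+3) ⁻¹' cs (3*k+3)) := by
    intro k
    rw [hEbiInter k, hprod (blk k)]
    simp only [hblk]
    rw [Finset.prod_insert (by simp only [Finset.mem_insert, Finset.mem_singleton]; omega), Finset.prod_insert (by simp only [Finset.mem_singleton]; omega),
      Finset.prod_singleton, mul_assoc]
  -- the block events are independent
  have hEindep : iIndepSet E μ := by
    rw [iIndepSet_iff_meas_biInter hEmeas]
    intro s
    have hinter : (⋂ k ∈ s, E k) = ⋂ n ∈ s.biUnion blk, M n ⁻¹' cs n := by
      ext ω
      simp only [Set.mem_iInter, Finset.mem_biUnion]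
      constructor
      · rintro h n ⟨k, hk, hn⟩
        have := h k hk
        rw [hEbiInter k] at this
        exact Set.mem_iInter₂.mp this n hn
      · intro h k hk
        rw [hEbiInter k]
        exact Set.mem_iInter₂.mpr fun n hn => h n ⟨k, hk, hn⟩
    rw [hinter, hprod, Finset.prod_biUnion
      (fun x hx y hy hxy => hblk_disj x trivial y trivial hxy)]
    apply Finset.prod_congr rfl
    intro k _
    rw [hEbiInter k, hprod (blk k)]
  -- sum of probabilities is infinite
  have hδ : (ν U * (3 : ENNReal)⁻¹) ^ 3 ≠ 0 := by
    apply pow_ne_zero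
    simp only [ne_eq, mul_eq_zero, not_or]
    exact ⟨hU, by simp⟩
  have hEtsum : (∑' k, μ (E k)) = ⊤ := by
    have hlow : ∀ k, (ν U * (3 : ENNReal)⁻¹) ^ 3 ≤ μ (E k) := by
      intro k
      rw [hμE k, pow_succ, pow_two]
      exact mul_le_mul' (mul_le_mul' (hAlow _) (hAlow _)) (hAlow _)
    have := ENNReal.tsum_le_tsum hlow
    rw [ENNReal.tsum_const_eq_top_of_ne_zero hδ] at this
    exact top_le_iff.mp this
  -- Borel-Cantelli
  have hlimsup : μ (limsup E atTop) = 1 :=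
    measure_limsup_eq_one hEmeas hEindep hEtsum
  have hae_limsup : ∀ᵐ ω ∂μ, ω ∈ limsup E atTop := by
    rw [ae_mem_iff_measure_eq]
    · rw [hlimsup, measure_univ]
    · have hms : MeasurableSet (limsup E atTop) := by
        rw [limsup_eq_iInf_iSup_of_nat]
        simp only [Set.iInf_eq_iInter, Set.iSup_eq_iUnion]
        exact MeasurableSet.iInter fun n => MeasurableSet.iUnion fun i =>
          MeasurableSet.iUnion fun _ => hEmeas i
      exact hms.nullMeasurableSet
  -- almost surely, every step matrix is an admissible row replacement
  have hok : ∀ n : ℕ, μ (M n ⁻¹' (⋃ i, goodMatrix 0 i)) = 1 := by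
    intro n
    have hmeasOk : MeasurableSet (⋃ i, goodMatrix (0:ℝ) i) :=
      MeasurableSet.iUnion fun i => meas_goodMatrix 0 i
    have h1 : randomMatrixLaw ν (⋃ i, goodMatrix 0 i) = 1 := by
      apply le_antisymm
      · rw [randomMatrixLaw, Measure.map_apply meas_rowReplace hmeasOk]
        calc (ν.prod (PMF.uniformOfFintype (Fin 3)).toMeasure)
              ((fun q : (Fin 3 → ℝ) × Fin 3 => rowReplaceMatrix q.1 q.2) ⁻¹'
                (⋃ i, goodMatrix 0 i))
            ≤ (ν.prod (PMF.uniformOfFintype (Fin 3)).toMeasure) Set.univ :=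
              measure_mono (Set.subset_univ _)
          _ = 1 := measure_univ
      rw [randomMatrixLaw, Measure.map_apply meas_rowReplace hmeasOk]
      have hsub : {p : Fin 3 → ℝ | (∀ c, (0:ℝ) ≤ p c) ∧ p 0 + p 1 + p 2 = 1}
          ×ˢ (Set.univ : Set (Fin 3)) ⊆
          (fun q : (Fin 3 → ℝ) × Fin 3 => rowReplaceMatrix q.1 q.2) ⁻¹'
            (⋃ i, goodMatrix 0 i) := by
        rintro ⟨p, j⟩ ⟨hp, -⟩
        exact Set.mem_iUnion.mpr ⟨j, mem_goodMatrix_rowReplace hp.1 hp.2⟩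
      have hT1 : ν {p : Fin 3 → ℝ | (∀ c, (0:ℝ) ≤ p c) ∧ p 0 + p 1 + p 2 = 1} = 1 := by
        rw [← measure_univ (μ := ν)]
        refine (ae_mem_iff_measure_eq ((measU 0).nullMeasurableSet)).mp ?_
        filter_upwards [haeν] with p hp using ⟨fun c => (hp.1 c).le, hp.2⟩
      calc (1 : ENNReal) = ν {p : Fin 3 → ℝ | (∀ c, (0:ℝ) ≤ p c) ∧ p 0 + p 1 + p 2 = 1}
            * (PMF.uniformOfFintype (Fin 3)).toMeasure Set.univ := by
            rw [hT1, measure_univ, one_mul]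
        _ = (ν.prod (PMF.uniformOfFintype (Fin 3)).toMeasure)
              ({p : Fin 3 → ℝ | (∀ c, (0:ℝ) ≤ p c) ∧ p 0 + p 1 + p 2 = 1} ×ˢ Set.univ) :=
            (Measure.prod_prod _ _).symm
        _ ≤ _ := measure_mono hsub
    rw [← hMlaw n, Measure.map_apply (hMmeas n) hmeasOk] at h1
    exact h1
  have hae_ok : ∀ᵐ ω ∂μ, ∀ n : ℕ, ω ∈ M n ⁻¹' (⋃ i, goodMatrix (0:ℝ) i) := by
    rw [ae_all_iff]
    intro n
    refine (ae_mem_iff_measure_eq ?_).mpr (by rw [hok n, measure_univ])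
    exact (((hMmeas n) (MeasurableSet.iUnion fun i => meas_goodMatrix 0 i))).nullMeasurableSet
  -- pointwise convergence on the a.s. good set
  have hmain : ∀ᵐ ω ∂μ, ∃ L : Matrix (Fin 3) (Fin 3) ℝ,
      Tendsto (fun n => S n ω) atTop (nhds L) ∧ L 0 = L 1 ∧ L 1 = L 2 := by
    filter_upwards [hae_ok, hae_limsup] with ω hωok hωls
    have hstep : ∀ n, StepRel (S n ω) (S (n + 1) ω) := by
      intro n
      obtain ⟨i, hmem⟩ := Set.mem_iUnion.mp (Set.mem_preimage.mp (hωok (n + 1)))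
      refine ⟨M (n + 1) ω i, i, hmem.2.1, hmem.2.2, ?_⟩
      rw [hSrec n ω]
      exact congrArg (· * S n ω) hmem.1
    have hblocks : ∀ K : ℕ, ∃ k, K ≤ k ∧ BlockGood ε (fun n => S n ω) (3 * k) := by
      intro K
      have hfreq : ∃ᶠ k in atTop, ω ∈ E k :=
        mem_limsup_iff_frequently_mem.mp hωls
      obtain ⟨k, hkK, hkE⟩ := (frequently_atTop.mp hfreq) K
      obtain ⟨⟨hm1, hm2⟩, hm3⟩ := hkE
      rw [Set.mem_preimage] at hm1 hm2 hm3
      simp only [hcs, hrow1 k, hrow2 k, hrow3 k] at hm1 hm2 hm3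
      refine ⟨k, hkK, M (3*k+1) ω 0, M (3*k+2) ω 1, M (3*k+3) ω 2,
        hm1.2.1, hm1.2.2, ?_, hm2.2.1, hm2.2.2, ?_, hm3.2.1, hm3.2.2, ?_⟩
      · show S (3*k+1) ω = rowReplaceMatrix (M (3*k+1) ω 0) 0 * S (3*k) ω
        rw [hSrec (3*k) ω]
        exact congrArg (· * S (3*k) ω) hm1.1
      · have := hSrec (3*k+1) ω
        rw [show 3*k+1+1 = 3*k+2 by omega] at this
        show S (3*k+2) ω = rowReplaceMatrix (M (3*k+2) ω 1) 1 * S (3*k+1) ω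
        rw [this]
        exact congrArg (· * S (3*k+1) ω) hm2.1
      · have := hSrec (3*k+2) ω
        rw [show 3*k+2+1 = 3*k+3 by omega] at this
        show S (3*k+3) ω = rowReplaceMatrix (M (3*k+3) ω 2) 2 * S (3*k+2) ω
        rw [this]
        exact congrArg (· * S (3*k+2) ω) hm3.1
    exact converge hstep hε hε1 hblocks
  -- build the limit function by choice
  refine ⟨fun ω => if h : ∃ L : Matrix (Fin 3) (Fin 3) ℝ,
      Tendsto (fun n => S n ω) atTop (nhds L) ∧ L 0 = L 1 ∧ L 1 = L 2
    then h.choose else 0, ?_⟩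
  filter_upwards [hmain] with ω hQ
  rw [dif_pos hQ]
  exact hQ.choose_spec
end

section
/- Suppose f : K → ℝ is continuous on a compact metric space K, and for each n, U_n^{(1)}, U_n^{(2)} are identically distributed K-valued random variables with ‖U_n^{(2)} − U_n^{(1)}‖ → 0 in probability, and μ_n is a random probability measure with E[⟨f, μ_n⟩] = E[f(U_n^{(1)})] and E[(⟨f, μ_n⟩ − f(U_n^{(1)}))²] = E[f(U_n^{(1)})² − f(U_n^{(1)})f(U_n^{(2)})]. Then Var(⟨f, μ_n⟩ − f(U_n^{(1)})) → 0 as n → ∞. -/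
open MeasureTheory ProbabilityTheory Filter

/-- Variance estimate used in the proof of convergence of the occupation
measure: if `f` is continuous on a compact metric space, `U¹ₙ, U²ₙ` are
identically distributed with `dist(U¹ₙ,U²ₙ) → 0` in probability, and the random
measures `μₙ` satisfy `E⟨f,μₙ⟩ = E[f(U¹ₙ)]` and
`E[(⟨f,μₙ⟩ − f(U¹ₙ))²] = E[f(U¹ₙ)² − f(U¹ₙ)f(U²ₙ)]`, then
`Var(⟨f,μₙ⟩ − f(U¹ₙ)) → 0`. -/
theorem variance_integral_minus_point_tendsto_zero
    {Ω : Type*} [MeasurableSpace Ω] (P : Measure Ω) [IsProbabilityMeasure P]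
    {K : Type*} [MetricSpace K] [CompactSpace K]
    [MeasurableSpace K] [BorelSpace K]
    (f : K → ℝ) (hf : Continuous f)
    (U1 U2 : ℕ → Ω → K)
    (hU1 : ∀ n, Measurable (U1 n)) (hU2 : ∀ n, Measurable (U2 n))
    (hid : ∀ n, IdentDistrib (U1 n) (U2 n) P P)
    (hdist : ∀ ε > (0 : ℝ),
      Tendsto (fun n => P {ω | ε ≤ dist (U1 n ω) (U2 n ω)}) atTop (nhds 0))
    (μn : ℕ → Ω → Measure K)
    (hμprob : ∀ n ω, IsProbabilityMeasure (μn n ω))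
    (hμmeas : ∀ n, Measurable fun ω => ∫ x, f x ∂(μn n ω))
    (hmean : ∀ n, (∫ ω, (∫ x, f x ∂(μn n ω)) ∂P) = ∫ ω, f (U1 n ω) ∂P)
    (hsecond : ∀ n,
      (∫ ω, ((∫ x, f x ∂(μn n ω)) - f (U1 n ω)) ^ 2 ∂P)
        = ∫ ω, (f (U1 n ω) ^ 2 - f (U1 n ω) * f (U2 n ω)) ∂P) :
    Tendsto
      (fun n => variance (fun ω => (∫ x, f x ∂(μn n ω)) - f (U1 n ω)) P)
      atTop (nhds 0) := by
  classical
  -- a uniform bound on `f`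
  obtain ⟨C₀, hC₀⟩ := isCompact_univ.exists_bound_of_continuousOn hf.continuousOn
  set C := max C₀ 0 with hCdef
  have hC0 : (0:ℝ) ≤ C := le_max_right _ _
  have hC : ∀ x, |f x| ≤ C := fun x =>
    le_trans (hC₀ x (Set.mem_univ x)) (le_max_left _ _)
  have hfU1 : ∀ n, Measurable fun ω => f (U1 n ω) := fun n => hf.measurable.comp (hU1 n)
  have hfU2 : ∀ n, Measurable fun ω => f (U2 n ω) := fun n => hf.measurable.comp (hU2 n)
  set I : ℕ → Ω → ℝ := fun n ω => ∫ x, f x ∂(μn n ω) with hIdef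
  have hIbound : ∀ n ω, |I n ω| ≤ C := by
    intro n ω
    have := hμprob n ω
    have h := norm_integral_le_of_norm_le_const (μ := μn n ω) (C := C)
      (Filter.Eventually.of_forall fun x => by
        rw [Real.norm_eq_abs]; exact hC x)
    simpa [Real.norm_eq_abs] using h
  set X : ℕ → Ω → ℝ := fun n ω => I n ω - f (U1 n ω) with hXdef
  have hXmeas : ∀ n, Measurable (X n) := fun n => (hμmeas n).sub (hfU1 n)
  have hXbound : ∀ n ω, |X n ω| ≤ 2 * C := by
    intro n ω
    calc |X n ω| ≤ |I n ω| + |f (U1 n ω)| := abs_sub _ _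
      _ ≤ C + C := add_le_add (hIbound n ω) (hC _)
      _ = 2 * C := by ring
  have hXL2 : ∀ n, MemLp (X n) 2 P := fun n =>
    MemLp.of_bound (hXmeas n).aestronglyMeasurable (2 * C)
      (Filter.Eventually.of_forall fun ω => by simpa using hXbound n ω)
  have hfU1int : ∀ n, Integrable (fun ω => f (U1 n ω)) P := fun n =>
    (integrable_const C).mono' (hfU1 n).aestronglyMeasurable
      (Filter.Eventually.of_forall fun ω => by simpa using hC (U1 n ω))
  have hIint : ∀ n, Integrable (I n) P := fun n =>
    (integrable_const C).mono' (hμmeas n).aestronglyMeasurable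
      (Filter.Eventually.of_forall fun ω => by simpa using hIbound n ω)
  have hEX : ∀ n, ∫ ω, X n ω ∂P = 0 := by
    intro n
    have := integral_sub (hIint n) (hfU1int n)
    simp only [hXdef]
    rw [this, hmean n, sub_self]
  -- variance equals the second-moment expression
  have hvar : ∀ n, variance (X n) P
      = ∫ ω, (f (U1 n ω) ^ 2 - f (U1 n ω) * f (U2 n ω)) ∂P := by
    intro n
    rw [variance_eq_sub (hXL2 n), hEX n]
    have : (∫ ω, (X n ^ 2) ω ∂P) = ∫ ω, (I n ω - f (U1 n ω)) ^ 2 ∂P := by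
      simp [hXdef, Pi.pow_apply]
    rw [this, hsecond n]
    ring
  -- the dominating sequence
  set g : ℕ → Ω → ℝ := fun n ω => |f (U1 n ω) - f (U2 n ω)| with hgdef
  have hgmeas : ∀ n, Measurable (g n) := fun n => ((hfU1 n).sub (hfU2 n)).abs
  have hgbound : ∀ n ω, g n ω ≤ 2 * C := by
    intro n ω
    calc g n ω ≤ |f (U1 n ω)| + |f (U2 n ω)| := abs_sub _ _
      _ ≤ C + C := add_le_add (hC _) (hC _)
      _ = 2 * C := by ring
  have hgint : ∀ n, Integrable (g n) P := fun n =>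
    (integrable_const (2 * C)).mono' (hgmeas n).aestronglyMeasurable
      (Filter.Eventually.of_forall fun ω => by
        rw [Real.norm_eq_abs, abs_of_nonneg (show 0 ≤ g n ω from abs_nonneg _)]; exact hgbound n ω)
  -- variance bound by C * ∫ g
  have hbound : ∀ n, variance (X n) P ≤ C * ∫ ω, g n ω ∂P := by
    intro n
    rw [hvar n]
    have hptwise : ∀ ω, f (U1 n ω) ^ 2 - f (U1 n ω) * f (U2 n ω) ≤ C * g n ω := by
      intro ω
      have h1 : f (U1 n ω) ^ 2 - f (U1 n ω) * f (U2 n ω)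
          = f (U1 n ω) * (f (U1 n ω) - f (U2 n ω)) := by ring
      calc f (U1 n ω) ^ 2 - f (U1 n ω) * f (U2 n ω)
          ≤ |f (U1 n ω) * (f (U1 n ω) - f (U2 n ω))| := by rw [h1]; exact le_abs_self _
        _ = |f (U1 n ω)| * |f (U1 n ω) - f (U2 n ω)| := abs_mul _ _
        _ ≤ C * g n ω := mul_le_mul_of_nonneg_right (hC _) (abs_nonneg _)
    have hlhsint : Integrable (fun ω => f (U1 n ω) ^ 2 - f (U1 n ω) * f (U2 n ω)) P := by
      refine (integrable_const (C ^ 2 + C * C)).mono'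
        (((hfU1 n).pow_const 2).sub ((hfU1 n).mul (hfU2 n))).aestronglyMeasurable
        (Filter.Eventually.of_forall fun ω => ?_)
      have h1 : |f (U1 n ω) ^ 2| ≤ C ^ 2 := by
        rw [abs_pow]
        exact pow_le_pow_left₀ (abs_nonneg _) (hC _) 2
      have h2 : |f (U1 n ω) * f (U2 n ω)| ≤ C * C := by
        rw [abs_mul]
        exact mul_le_mul (hC _) (hC _) (abs_nonneg _) hC0
      simp only [Real.norm_eq_abs]
      calc |f (U1 n ω) ^ 2 - f (U1 n ω) * f (U2 n ω)|
          ≤ |f (U1 n ω) ^ 2| + |f (U1 n ω) * f (U2 n ω)| := abs_sub _ _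
        _ ≤ C ^ 2 + C * C := add_le_add h1 h2
    calc (∫ ω, (f (U1 n ω) ^ 2 - f (U1 n ω) * f (U2 n ω)) ∂P)
        ≤ ∫ ω, C * g n ω ∂P :=
          integral_mono hlhsint ((hgint n).const_mul C) hptwise
      _ = C * ∫ ω, g n ω ∂P := integral_const_mul C _
  -- ∫ g n → 0 by uniform continuity and convergence in probability
  have hg0 : Tendsto (fun n => ∫ ω, g n ω ∂P) atTop (nhds 0) := by
    have hUC := Metric.uniformContinuous_iff.mp
      (CompactSpace.uniformContinuous_of_continuous hf)
    rw [Metric.tendsto_atTop]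
    intro ε hε
    obtain ⟨δ, hδ, hδf⟩ := hUC (ε / 3) (by positivity)
    have hPr : Tendsto (fun n => (P {ω | δ ≤ dist (U1 n ω) (U2 n ω)}).toReal)
        atTop (nhds 0) := by
      have h := (ENNReal.tendsto_toReal (by simp : (0:ENNReal) ≠ ⊤)).comp (hdist δ hδ)
      exact h
    obtain ⟨N, hN⟩ := (Metric.tendsto_atTop.mp hPr) (ε / (3 * (2 * C + 1)))
      (by positivity)
    refine ⟨N, fun n hn => ?_⟩
    set A : Set Ω := {ω | δ ≤ dist (U1 n ω) (U2 n ω)} with hAdef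
    have hA : MeasurableSet A := by
      have hd : Measurable fun ω => dist (U1 n ω) (U2 n ω) := (hU1 n).dist (hU2 n)
      exact measurableSet_le measurable_const hd
    have hPA : (P A).toReal < ε / (3 * (2 * C + 1)) := by
      have := hN n hn
      rw [Real.dist_eq] at this
      calc (P A).toReal ≤ |(P A).toReal - 0| := by rw [sub_zero]; exact le_abs_self _
        _ < ε / (3 * (2 * C + 1)) := this
    have hgle : ∀ ω, g n ω ≤ ε / 3 + A.indicator (fun _ => 2 * C) ω := by
      intro ω
      by_cases h : ω ∈ A
      · rw [Set.indicator_of_mem h]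
        have := hgbound n ω
        have : (0:ℝ) < ε / 3 := by positivity
        linarith [hgbound n ω]
      · rw [Set.indicator_of_notMem h]
        have hlt : dist (U1 n ω) (U2 n ω) < δ := lt_of_not_ge h
        have := hδf hlt
        rw [Real.dist_eq] at this
        simp only [hgdef, add_zero]
        linarith
    have hintRHS : Integrable (fun ω => ε / 3 + A.indicator (fun _ => 2 * C) ω) P :=
      (integrable_const (ε / 3)).add ((integrable_const (2 * C)).indicator hA)
    have hmono : (∫ ω, g n ω ∂P) ≤ ε / 3 + 2 * C * (P A).toReal := by
      calc (∫ ω, g n ω ∂P) ≤ ∫ ω, (ε / 3 + A.indicator (fun _ => 2 * C) ω) ∂P :=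
            integral_mono (hgint n) hintRHS hgle
        _ = ε / 3 + 2 * C * (P A).toReal := by
            rw [integral_add (integrable_const _) ((integrable_const (2 * C)).indicator hA)]
            rw [integral_const, integral_indicator_const _ hA]
            simp [mul_comm, Measure.real]
    have hgnn : 0 ≤ ∫ ω, g n ω ∂P := integral_nonneg fun ω => abs_nonneg _
    rw [Real.dist_eq, sub_zero, abs_of_nonneg hgnn]
    have hkey : 2 * C * (P A).toReal ≤ ε / 3 := by
      have h1 : 2 * C * (P A).toReal ≤ 2 * C * (ε / (3 * (2 * C + 1))) :=
        mul_le_mul_of_nonneg_left (le_of_lt hPA) (by positivity)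
      have h2 : 2 * C * (ε / (3 * (2 * C + 1))) ≤ ε / 3 := by
        have heq : 2 * C * (ε / (3 * (2 * C + 1))) = (2 * C * ε) / (3 * (2 * C + 1)) := by
          ring
        rw [heq, div_le_div_iff₀ (by positivity) (by norm_num : (0:ℝ) < 3)]
        nlinarith [hε.le, hC0]
      linarith
    linarith
  -- squeeze
  have hCg0 : Tendsto (fun n => C * ∫ ω, g n ω ∂P) atTop (nhds 0) := by
    have := hg0.const_mul C
    simpa using this
  exact squeeze_zero (fun n => variance_nonneg _ P) hbound hCg0
end

section
/- Let ν be the distribution on ℝ₊³ with ν = δ_{(1/3,1/3,1/3)}. The Markov chain on the 2-simplex defined by C ↦ C·M, where M is uniformly one of the three matrices obtained from the identity by replacing one row by (1/3,1/3,1/3), has the uniform distribution on the simplex as its unique symmetric stationary law. Equivalently, if U is uniform on a triangle T̃, then U has the same law as a point chosen as follows: split T̃ at its centroid into three triangles, pick one uniformly, and sample U' with the corresponding rescaled law; U' is uniform on T̃. -/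
open MeasureTheory Pointwise

/-- The uniform probability measure on a subset of the plane. -/
noncomputable def unifOn (s : Set (EuclideanSpace ℝ (Fin 2))) :
    Measure (EuclideanSpace ℝ (Fin 2)) :=
  (volume s)⁻¹ • volume.restrict s

namespace CentroidSplit

noncomputable section

abbrev E2 := EuclideanSpace ℝ (Fin 2)

def triB (P Q R : E2) (h : AffineIndependent ℝ ![P, Q, R]) : AffineBasis (Fin 3) ℝ E2 :=
  ⟨![P, Q, R], h, by
    rw [AffineIndependent.affineSpan_eq_top_iff_card_eq_finrank_add_one h]
    simp⟩

lemma combo_mem (P Q R : E2) (p q r : ℝ) (hp : 0 ≤ p) (hq : 0 ≤ q) (hr : 0 ≤ r)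
    (hs : p + q + r = 1) : p • P + q • Q + r • R ∈ convexHull ℝ ({P, Q, R} : Set E2) := by
  have := Finset.centerMass_mem_convexHull (t := (Finset.univ : Finset (Fin 3)))
    (w := ![p, q, r]) (z := ![P, Q, R]) (s := {P, Q, R})
    (by intro i _; fin_cases i <;> assumption)
    (by rw [Fin.sum_univ_three]; simp; linarith)
    (by intro i _; fin_cases i <;> simp)
  rwa [Finset.centerMass_eq_of_sum_1 _ _ (by rw [Fin.sum_univ_three]; simpa using hs),
    Fin.sum_univ_three] at this

lemma convex_aux (f g k : E2 →ᵃ[ℝ] ℝ) : Convex ℝ {x | 0 ≤ k x ∧ k x ≤ f x ∧ k x ≤ g x} := by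
  have hset : {x | 0 ≤ k x ∧ k x ≤ f x ∧ k x ≤ g x}
      = (k ⁻¹' Set.Ici 0) ∩ ((f - k) ⁻¹' Set.Ici 0 ∩ (g - k) ⁻¹' Set.Ici 0) := by
    ext x
    simp only [Set.mem_setOf_eq, Set.mem_inter_iff, Set.mem_preimage, Set.mem_Ici,
      AffineMap.coe_sub, Pi.sub_apply, sub_nonneg]
  rw [hset]
  exact ((convex_Ici (0:ℝ)).affine_preimage k).inter
    (((convex_Ici (0:ℝ)).affine_preimage (f - k)).inter ((convex_Ici (0:ℝ)).affine_preimage (g - k)))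

variable (P Q R : E2) (h : AffineIndependent ℝ ![P, Q, R])

lemma coord_w (w : Fin 3 → ℝ) (hw : w 0 + w 1 + w 2 = 1) (i : Fin 3) :
    (triB P Q R h).coord i (w 0 • P + w 1 • Q + w 2 • R) = w i := by
  have hs : ∑ j, w j = 1 := by rw [Fin.sum_univ_three]; exact hw
  have h1 : w 0 • P + w 1 • Q + w 2 • R = Finset.univ.affineCombination ℝ ![P,Q,R] w := by
    rw [Finset.affineCombination_eq_linear_combination _ _ _ hs, Fin.sum_univ_three]; simp
  rw [h1]
  have := AffineBasis.coord_apply_combination_of_mem (triB P Q R h) (Finset.mem_univ i) hs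
  rw [show ⇑(triB P Q R h) = ![P, Q, R] from rfl] at this
  simpa [triB] using this

lemma self_combo (x : E2) :
    x = (triB P Q R h).coord 0 x • P + (triB P Q R h).coord 1 x • Q + (triB P Q R h).coord 2 x • R := by
  have h1 := (triB P Q R h).affineCombination_coord_eq_self x
  rw [Finset.affineCombination_eq_linear_combination _ _ _ ((triB P Q R h).sum_coord_apply_eq_one x)] at h1
  rw [Fin.sum_univ_three] at h1
  rw [show ⇑(triB P Q R h) = ![P, Q, R] from rfl] at h1
  simpa [triB] using h1.symm

lemma coord_sum (x : E2) :
    (triB P Q R h).coord 0 x + (triB P Q R h).coord 1 x + (triB P Q R h).coord 2 x = 1 := by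
  have := (triB P Q R h).sum_coord_apply_eq_one x
  rwa [Fin.sum_univ_three] at this

lemma coord_vert (i j : Fin 3) : (triB P Q R h).coord i (![P, Q, R] j) = if i = j then 1 else 0 := by
  have := (triB P Q R h).coord_apply i j
  rw [show ⇑(triB P Q R h) = ![P, Q, R] from rfl] at this
  simpa [triB, eq_comm] using this

lemma coord_M (M : E2) (hM : M = (3:ℝ)⁻¹ • (P + Q + R)) (i : Fin 3) :
    (triB P Q R h).coord i M = 3⁻¹ := by
  have hMc : M = (3:ℝ)⁻¹ • P + (3:ℝ)⁻¹ • Q + (3:ℝ)⁻¹ • R := by rw [hM]; module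
  have h2 := coord_w P Q R h ![3⁻¹,3⁻¹,3⁻¹] (by show (3:ℝ)⁻¹ + 3⁻¹ + 3⁻¹ = 1; norm_num) i
  rw [hMc]
  fin_cases i <;> simpa using h2

lemma range_triB : Set.range ⇑(triB P Q R h) = {P, Q, R} := by
  have : ⇑(triB P Q R h) = ![P, Q, R] := rfl
  rw [this]
  ext x
  constructor
  · rintro ⟨i, rfl⟩; fin_cases i <;> simp
  · rintro (rfl | rfl | rfl)
    exacts [⟨0, rfl⟩, ⟨1, rfl⟩, ⟨2, rfl⟩]

lemma big_tri_eq :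
    convexHull ℝ {P, Q, R} = {x | ∀ i, 0 ≤ (triB P Q R h).coord i x} := by
  have := (triB P Q R h).convexHull_eq_nonneg_coord
  rwa [range_triB] at this

lemma sub_tri_eq (M : E2) (hM : M = (3:ℝ)⁻¹ • (P + Q + R)) :
    convexHull ℝ {P, Q, M} =
      {x | 0 ≤ (triB P Q R h).coord 2 x ∧ (triB P Q R h).coord 2 x ≤ (triB P Q R h).coord 0 x
        ∧ (triB P Q R h).coord 2 x ≤ (triB P Q R h).coord 1 x} := by
  apply Set.Subset.antisymm
  · apply convexHull_min
    · intro y hy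
      simp only [Set.mem_insert_iff, Set.mem_singleton_iff] at hy
      rcases hy with hy | hy | hy <;> rw [hy]
      · have h0 : (triB P Q R h).coord 0 P = 1 := by simpa using coord_vert P Q R h 0 0
        have h1 : (triB P Q R h).coord 1 P = 0 := by simpa using coord_vert P Q R h 1 0
        have h2 : (triB P Q R h).coord 2 P = 0 := by simpa using coord_vert P Q R h 2 0
        exact ⟨by rw [h2], by rw [h2, h0]; norm_num, by rw [h2, h1]⟩
      · have h0 : (triB P Q R h).coord 0 Q = 0 := by simpa using coord_vert P Q R h 0 1
        have h1 : (triB P Q R h).coord 1 Q = 1 := by simpa using coord_vert P Q R h 1 1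
        have h2 : (triB P Q R h).coord 2 Q = 0 := by simpa using coord_vert P Q R h 2 1
        exact ⟨by rw [h2], by rw [h2, h0], by rw [h2, h1]; norm_num⟩
      · have hc := coord_M P Q R h _ hM
        exact ⟨by rw [hc]; norm_num, by rw [hc 2, hc 0], by rw [hc 2, hc 1]⟩
    · exact convex_aux ((triB P Q R h).coord 0) ((triB P Q R h).coord 1) ((triB P Q R h).coord 2)
  · rintro x ⟨h2, h20, h21⟩
    have hx := self_combo P Q R h x
    have hsum := coord_sum P Q R h x
    have hrw : x = ((triB P Q R h).coord 0 x - (triB P Q R h).coord 2 x) • P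
        + ((triB P Q R h).coord 1 x - (triB P Q R h).coord 2 x) • Q
        + (3 * (triB P Q R h).coord 2 x) • M := by
      rw [hM]; conv_lhs => rw [hx]
      module
    rw [hrw]
    exact combo_mem P Q M _ _ _ (by linarith) (by linarith) (by linarith) (by linarith)

def mixMap (b : AffineBasis (Fin 3) ℝ E2) (q : Fin 3 → E2) : E2 →ᵃ[ℝ] E2 :=
  ((Fintype.linearCombination ℝ q).toAffineMap).comp b.coords

lemma mixMap_apply (b : AffineBasis (Fin 3) ℝ E2) (q : Fin 3 → E2) (x : E2) :
    mixMap b q x = b.coord 0 x • q 0 + b.coord 1 x • q 1 + b.coord 2 x • q 2 := by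
  simp [mixMap, Fintype.linearCombination_apply, Fin.sum_univ_three, AffineBasis.coords]

lemma vol_affine_image (f : E2 →ᵃ[ℝ] E2) (s : Set E2) :
    volume (f '' s) = ENNReal.ofReal |LinearMap.det f.linear| * volume s := by
  have hd : f '' s = f 0 +ᵥ (⇑f.linear '' s) := by
    ext y
    simp only [Set.mem_image, Set.mem_vadd_set]
    constructor
    · rintro ⟨x, hx, rfl⟩
      exact ⟨f.linear x, ⟨x, hx, rfl⟩, by rw [f.decomp]; simp [add_comm]⟩
    · rintro ⟨z, ⟨x, hx, rfl⟩, rfl⟩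
      exact ⟨x, hx, by rw [f.decomp]; simp [add_comm]⟩
  rw [hd, measure_vadd, Measure.addHaar_image_linearMap]

lemma ind_cyc (h : AffineIndependent ℝ ![P, Q, R]) : AffineIndependent ℝ ![Q, R, P] := by
  rw [show ![Q, R, P] = ![P, Q, R] ∘ ((⟨![1, 2, 0], ![2, 0, 1], by decide, by decide⟩ : Fin 3 ≃ Fin 3)) from by
    funext i; fin_cases i <;> rfl]
  exact (affineIndependent_equiv _).mpr h

lemma vol_pos (h : AffineIndependent ℝ ![P, Q, R]) : 0 < volume (convexHull ℝ ({P, Q, R} : Set E2)) := by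
  have htop : affineSpan ℝ ({P, Q, R} : Set E2) = ⊤ := by
    have := (triB P Q R h).tot
    rwa [range_triB] at this
  have hne : (interior (convexHull ℝ ({P, Q, R} : Set E2))).Nonempty :=
    interior_convexHull_nonempty_iff_affineSpan_eq_top.mpr htop
  calc 0 < volume (interior (convexHull ℝ ({P, Q, R} : Set E2))) :=
        isOpen_interior.measure_pos volume hne
    _ ≤ _ := measure_mono interior_subset

lemma vol_fin (s : Set E2) (hs : s.Finite) : volume (convexHull ℝ s) < ⊤ :=
  (hs.isCompact_convexHull (𝕜 := ℝ)).measure_lt_top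

lemma line_null (p q : E2) : volume (affineSpan ℝ ({p, q} : Set E2) : Set E2) = 0 := by
  apply Measure.addHaar_affineSubspace
  intro htop
  have hvs : vectorSpan ℝ ({p, q} : Set E2) = ⊤ := by
    rw [← direction_affineSpan, htop]
    exact AffineSubspace.direction_top ℝ _ _
  rw [vectorSpan_pair] at hvs
  rcases eq_or_ne (p -ᵥ q) 0 with hz | hz
  · rw [hz] at hvs
    simp only [Submodule.span_zero_singleton] at hvs
    exact absurd hvs bot_ne_top
  · have h1 : Module.finrank ℝ (ℝ ∙ (p -ᵥ q)) = 1 := finrank_span_singleton hz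
    rw [hvs, finrank_top] at h1
    simp [finrank_euclideanSpace] at h1

lemma cyc_map_spec (h : AffineIndependent ℝ ![P, Q, R]) (M : E2) (hM : M = (3:ℝ)⁻¹ • (P + Q + R)) :
    ∃ g : E2 →ᵃ[ℝ] E2, g P = Q ∧ g Q = R ∧ g R = P ∧ g M = M := by
  refine ⟨mixMap (triB P Q R h) ![Q, R, P], ?_, ?_, ?_, ?_⟩
  · have h0 : (triB P Q R h).coord 0 P = 1 := by simpa using coord_vert P Q R h 0 0
    have h1 : (triB P Q R h).coord 1 P = 0 := by simpa using coord_vert P Q R h 1 0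
    have h2 : (triB P Q R h).coord 2 P = 0 := by simpa using coord_vert P Q R h 2 0
    rw [mixMap_apply, h0, h1, h2]
    simp
  · have h0 : (triB P Q R h).coord 0 Q = 0 := by simpa using coord_vert P Q R h 0 1
    have h1 : (triB P Q R h).coord 1 Q = 1 := by simpa using coord_vert P Q R h 1 1
    have h2 : (triB P Q R h).coord 2 Q = 0 := by simpa using coord_vert P Q R h 2 1
    rw [mixMap_apply, h0, h1, h2]
    simp
  · have h0 : (triB P Q R h).coord 0 R = 0 := by simpa using coord_vert P Q R h 0 2
    have h1 : (triB P Q R h).coord 1 R = 0 := by simpa using coord_vert P Q R h 1 2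
    have h2 : (triB P Q R h).coord 2 R = 1 := by simpa using coord_vert P Q R h 2 2
    rw [mixMap_apply, h0, h1, h2]
    simp
  · have hc := coord_M P Q R h _ hM
    rw [mixMap_apply, hc 0, hc 1, hc 2, hM]
    show (3:ℝ)⁻¹ • Q + (3:ℝ)⁻¹ • R + (3:ℝ)⁻¹ • P = _
    module

/-- All three subtriangles have the same volume. -/
lemma vol_subtri_eq (h : AffineIndependent ℝ ![P, Q, R]) (M : E2) (hM : M = (3:ℝ)⁻¹ • (P + Q + R)) :
    volume (convexHull ℝ ({P, Q, M} : Set E2)) = volume (convexHull ℝ ({Q, R, M} : Set E2)) ∧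
    volume (convexHull ℝ ({Q, R, M} : Set E2)) = volume (convexHull ℝ ({R, P, M} : Set E2)) := by
  obtain ⟨g, hgP, hgQ, hgR, hgM⟩ := cyc_map_spec P Q R h M hM
  set d := ENNReal.ofReal |LinearMap.det g.linear| with hd
  have himg : ∀ s : Set E2, volume (⇑g '' s) = d * volume s := fun s => vol_affine_image g s
  have hbig : ⇑g '' (convexHull ℝ ({P, Q, R} : Set E2)) = convexHull ℝ ({P, Q, R} : Set E2) := by
    rw [AffineMap.image_convexHull]
    congr 1
    rw [Set.image_insert_eq, Set.image_insert_eq, Set.image_singleton, hgP, hgQ, hgR]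
    ext x; simp; tauto
  have hd1 : d = 1 := by
    have h1 : d * volume (convexHull ℝ ({P, Q, R} : Set E2))
        = volume (convexHull ℝ ({P, Q, R} : Set E2)) := by
      rw [← himg, hbig]
    have hp := (vol_pos P Q R h).ne'
    have hf := (vol_fin {P, Q, R} (by simp)).ne
    exact (ENNReal.mul_eq_right hp hf).mp h1
  constructor
  · have : ⇑g '' (convexHull ℝ ({P, Q, M} : Set E2)) = convexHull ℝ ({Q, R, M} : Set E2) := by
      rw [AffineMap.image_convexHull]
      congr 1
      rw [Set.image_insert_eq, Set.image_insert_eq, Set.image_singleton, hgP, hgQ, hgM]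
    rw [← this, himg, hd1, one_mul]
  · have : ⇑g '' (convexHull ℝ ({Q, R, M} : Set E2)) = convexHull ℝ ({R, P, M} : Set E2) := by
      rw [AffineMap.image_convexHull]
      congr 1
      rw [Set.image_insert_eq, Set.image_insert_eq, Set.image_singleton, hgQ, hgR, hgM]
    rw [← this, himg, hd1, one_mul]

lemma coord_cyc (h : AffineIndependent ℝ ![P, Q, R]) (x : E2) :
    (triB Q R P (ind_cyc P Q R h)).coord 0 x = (triB P Q R h).coord 1 x ∧
    (triB Q R P (ind_cyc P Q R h)).coord 1 x = (triB P Q R h).coord 2 x ∧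
    (triB Q R P (ind_cyc P Q R h)).coord 2 x = (triB P Q R h).coord 0 x := by
  have hsum := coord_sum P Q R h x
  set w : Fin 3 → ℝ := ![(triB P Q R h).coord 1 x, (triB P Q R h).coord 2 x,
    (triB P Q R h).coord 0 x] with hw
  have hw0 : w 0 = (triB P Q R h).coord 1 x := rfl
  have hw1 : w 1 = (triB P Q R h).coord 2 x := rfl
  have hw2 : w 2 = (triB P Q R h).coord 0 x := rfl
  have hx : w 0 • Q + w 1 • R + w 2 • P = x := by
    rw [hw0, hw1, hw2]
    conv_rhs => rw [self_combo P Q R h x]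
    module
  have h0 := coord_w Q R P (ind_cyc P Q R h) w (by rw [hw0, hw1, hw2]; linarith) 0
  have h1 := coord_w Q R P (ind_cyc P Q R h) w (by rw [hw0, hw1, hw2]; linarith) 1
  have h2 := coord_w Q R P (ind_cyc P Q R h) w (by rw [hw0, hw1, hw2]; linarith) 2
  rw [hx] at h0 h1 h2
  rw [hw0] at h0; rw [hw1] at h1; rw [hw2] at h2
  exact ⟨h0, h1, h2⟩

lemma sub_tri_eq2 (h : AffineIndependent ℝ ![P, Q, R]) (M : E2)
    (hM : M = (3:ℝ)⁻¹ • (P + Q + R)) :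
    convexHull ℝ {Q, R, M} =
      {x | 0 ≤ (triB P Q R h).coord 0 x ∧ (triB P Q R h).coord 0 x ≤ (triB P Q R h).coord 1 x
        ∧ (triB P Q R h).coord 0 x ≤ (triB P Q R h).coord 2 x} := by
  rw [sub_tri_eq Q R P (ind_cyc P Q R h) M (by rw [hM]; module)]
  ext x
  obtain ⟨e0, e1, e2⟩ := coord_cyc P Q R h x
  rw [Set.mem_setOf_eq, Set.mem_setOf_eq, e0, e1, e2]

lemma sub_tri_eq3 (h : AffineIndependent ℝ ![P, Q, R]) (M : E2)
    (hM : M = (3:ℝ)⁻¹ • (P + Q + R)) :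
    convexHull ℝ {R, P, M} =
      {x | 0 ≤ (triB P Q R h).coord 1 x ∧ (triB P Q R h).coord 1 x ≤ (triB P Q R h).coord 2 x
        ∧ (triB P Q R h).coord 1 x ≤ (triB P Q R h).coord 0 x} := by
  rw [sub_tri_eq2 Q R P (ind_cyc P Q R h) M (by rw [hM]; module)]
  ext x
  obtain ⟨e0, e1, e2⟩ := coord_cyc P Q R h x
  rw [Set.mem_setOf_eq, Set.mem_setOf_eq, e0, e1, e2]

lemma union_eq (h : AffineIndependent ℝ ![P, Q, R]) (M : E2)
    (hM : M = (3:ℝ)⁻¹ • (P + Q + R)) :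
    convexHull ℝ ({P, Q, R} : Set E2) =
      convexHull ℝ {P, Q, M} ∪ convexHull ℝ {Q, R, M} ∪ convexHull ℝ {R, P, M} := by
  rw [big_tri_eq P Q R h, sub_tri_eq P Q R h M hM, sub_tri_eq2 P Q R h M hM,
    sub_tri_eq3 P Q R h M hM]
  ext x
  simp only [Set.mem_setOf_eq, Set.mem_union]
  constructor
  · intro hx
    have h0 := hx 0; have h1 := hx 1; have h2 := hx 2
    rcases le_total ((triB P Q R h).coord 2 x) ((triB P Q R h).coord 0 x) with g1 | g1 <;>
      rcases le_total ((triB P Q R h).coord 2 x) ((triB P Q R h).coord 1 x) with g2 | g2 <;>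
      rcases le_total ((triB P Q R h).coord 0 x) ((triB P Q R h).coord 1 x) with g3 | g3
    · exact Or.inl (Or.inl ⟨h2, g1, g2⟩)
    · exact Or.inl (Or.inl ⟨h2, g1, g2⟩)
    · exact Or.inl (Or.inr ⟨h0, g3, by linarith⟩)
    · exact Or.inr ⟨h1, g2, g3⟩
    · exact Or.inl (Or.inr ⟨h0, g3, g1⟩)
    · exact Or.inr ⟨h1, by linarith, g3⟩
    · exact Or.inl (Or.inr ⟨h0, g3, g1⟩)
    · exact Or.inr ⟨h1, g2, g3⟩
  · rintro ((⟨a1, a2, a3⟩ | ⟨a1, a2, a3⟩) | ⟨a1, a2, a3⟩) <;> intro i <;> fin_cases i <;>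
      first
      | (show 0 ≤ (triB P Q R h).coord 0 x; linarith)
      | (show 0 ≤ (triB P Q R h).coord 1 x; linarith)
      | (show 0 ≤ (triB P Q R h).coord 2 x; linarith)

lemma inter_null (h : AffineIndependent ℝ ![P, Q, R]) (M : E2)
    (hM : M = (3:ℝ)⁻¹ • (P + Q + R)) :
    volume (convexHull ℝ ({P, Q, M} : Set E2) ∩ convexHull ℝ ({Q, R, M} : Set E2)) = 0 := by
  apply measure_mono_null _ (line_null Q M)
  rw [sub_tri_eq P Q R h M hM, sub_tri_eq2 P Q R h M hM]
  rintro x ⟨⟨a1, a2, a3⟩, ⟨b1, b2, b3⟩⟩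
  have hsum := coord_sum P Q R h x
  have hαγ : (triB P Q R h).coord 0 x = (triB P Q R h).coord 2 x := le_antisymm b3 a2
  have hx := self_combo P Q R h x
  rw [hαγ, show (triB P Q R h).coord 1 x = 1 - 2 * (triB P Q R h).coord 2 x by linarith] at hx
  have hxe : x = (3 * (triB P Q R h).coord 2 x) • (M -ᵥ Q) +ᵥ Q := by
    conv_lhs => rw [hx]
    rw [hM]
    simp only [vsub_eq_sub, vadd_eq_add]
    module
  rw [hxe]
  exact AffineSubspace.smul_vsub_vadd_mem _ _ (right_mem_affineSpan_pair ℝ Q M)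
    (left_mem_affineSpan_pair ℝ Q M) (left_mem_affineSpan_pair ℝ Q M)

end

end CentroidSplit

open CentroidSplit

/-- Stationarity of the uniform law for the centroid-splitting chain
(case `ν = δ_{(1/3,1/3,1/3)}`): splitting a nondegenerate triangle `ABC` at its
centroid `M` into the three triangles `ABM`, `BCM`, `CAM`, picking one of them
uniformly at random and sampling a uniform point in it produces a uniform point
of `ABC`.  Equivalently, the uniform law on the filled triangle is the equal
mixture of the uniform laws on the three subtriangles. -/
theorem uniform_stationary_centroid_split
    (A B C : EuclideanSpace ℝ (Fin 2)) (hind : AffineIndependent ℝ ![A, B, C])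
    (M : EuclideanSpace ℝ (Fin 2)) (hM : M = (3:ℝ)⁻¹ • (A + B + C)) :
    unifOn (convexHull ℝ {A, B, C})
      = (1/3 : ENNReal) • unifOn (convexHull ℝ {A, B, M})
        + (1/3 : ENNReal) • unifOn (convexHull ℝ {B, C, M})
        + (1/3 : ENNReal) • unifOn (convexHull ℝ {C, A, M}) := by
  have h2 := ind_cyc A B C hind
  have hM2 : M = (3:ℝ)⁻¹ • (B + C + A) := by rw [hM]; module
  have h3 := ind_cyc B C A h2
  have hM3 : M = (3:ℝ)⁻¹ • (C + A + B) := by rw [hM]; module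
  set T : Set E2 := convexHull ℝ {A, B, C} with hT
  set T1 : Set E2 := convexHull ℝ {A, B, M} with hT1
  set T2 : Set E2 := convexHull ℝ {B, C, M} with hT2
  set T3 : Set E2 := convexHull ℝ {C, A, M} with hT3
  have m1 : MeasurableSet T1 := ((Set.toFinite _).isCompact_convexHull (𝕜 := ℝ)).isClosed.measurableSet
  have m2 : MeasurableSet T2 := ((Set.toFinite _).isCompact_convexHull (𝕜 := ℝ)).isClosed.measurableSet
  have m3 : MeasurableSet T3 := ((Set.toFinite _).isCompact_convexHull (𝕜 := ℝ)).isClosed.measurableSet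
  have n12 : volume (T1 ∩ T2) = 0 := inter_null A B C hind M hM
  have n23 : volume (T2 ∩ T3) = 0 := inter_null B C A h2 M hM2
  have n31 : volume (T3 ∩ T1) = 0 := inter_null C A B h3 M hM3
  have hU : T = T1 ∪ T2 ∪ T3 := union_eq A B C hind M hM
  obtain ⟨e12, e23⟩ := vol_subtri_eq A B C hind M hM
  rw [← hT2] at e12 e23
  rw [← hT3] at e23
  -- the restriction decomposes
  have RD : volume.restrict T = volume.restrict T1 + volume.restrict T2 + volume.restrict T3 := by
    ext s hs
    rw [Measure.add_apply, Measure.add_apply, Measure.restrict_apply hs,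
      Measure.restrict_apply hs, Measure.restrict_apply hs, Measure.restrict_apply hs, hU]
    rw [Set.inter_union_distrib_left, Set.inter_union_distrib_left]
    rw [measure_union₀ ((hs.inter m3).nullMeasurableSet) ?d1,
      measure_union₀ ((hs.inter m2).nullMeasurableSet) ?d2]
    case d1 =>
      have hsub : ((s ∩ T1) ∪ (s ∩ T2)) ∩ (s ∩ T3) ⊆ (T3 ∩ T1) ∪ (T2 ∩ T3) := by
        rintro x ⟨(⟨-, h1⟩ | ⟨-, h2⟩), ⟨-, h3⟩⟩
        · exact Or.inl ⟨h3, h1⟩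
        · exact Or.inr ⟨h2, h3⟩
      exact measure_mono_null hsub (measure_union_null n31 n23)
    case d2 =>
      have hsub : (s ∩ T1) ∩ (s ∩ T2) ⊆ T1 ∩ T2 := by
        rintro x ⟨⟨-, h1⟩, ⟨-, h2⟩⟩
        exact ⟨h1, h2⟩
      exact measure_mono_null hsub n12
  -- total volume
  have hv : volume T = volume T1 + volume T2 + volume T3 := by
    have := congrArg (fun μ : Measure E2 => μ Set.univ) RD
    simpa using this
  have hT0 : volume T ≠ 0 := (vol_pos A B C hind).ne'
  have hTtop : volume T ≠ ⊤ := (vol_fin {A, B, C} (Set.toFinite _)).ne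
  have vT1 : volume T1 = volume T / 3 := by
    rw [ENNReal.eq_div_iff (by norm_num) (by norm_num)]
    rw [hv, ← e12, ← e23, ← e12]
    ring
  have vT2 : volume T2 = volume T / 3 := by rw [← e12]; exact vT1
  have vT3 : volume T3 = volume T / 3 := by rw [← e23, ← e12]; exact vT1
  have key : (1/3 : ENNReal) * (volume T / 3)⁻¹ = (volume T)⁻¹ := by
    rw [one_div, div_eq_mul_inv, ENNReal.mul_inv (Or.inl hT0) (Or.inl hTtop), inv_inv,
      mul_comm ((volume T)⁻¹) (3 : ENNReal), ← mul_assoc,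
      ENNReal.inv_mul_cancel (by norm_num) (by norm_num), one_mul]
  have hterm : ∀ S : Set E2, volume S = volume T / 3 →
      (1/3 : ENNReal) • unifOn S = (volume T)⁻¹ • volume.restrict S := by
    intro S hS
    rw [unifOn, smul_smul, hS, key]
  rw [hterm T1 vT1, hterm T2 vT2, hterm T3 vT3, unifOn, RD, smul_add, smul_add]
end
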